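/- arXiv:1309.7745 — 9 statements merged into one kernel-verified Lean document; each statement's English description precedes it below -/
import Mathlib

section
/- Let c₁, c₂ be complex numbers with max(|Re c₁|, |Im c₁|) ≤ 1 and max(|Re c₂|, |Im c₂|) ≤ 1. Then max(|Re(c₁+c₂)|, |Im(c₁+c₂)|) > 1 and max(|Re(c₁-c₂)|, |Im(c₁-c₂)|) > 1 holds if and only if |Re c₁| + |Re c₂| > 1, |Im c₁| + |Im c₂| > 1, and (Re c₁)(Re c₂)(Im c₁)(Im c₂) < 0. -/
open Complex

private lemma hsame (u v : ℝ) (h : 0 < u * v) : |u + v| = |u| + |v| := by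
  rcases mul_pos_iff.mp h with ⟨hu, hv⟩ | ⟨hu, hv⟩
  · rw [abs_of_pos hu, abs_of_pos hv, abs_of_pos (by linarith)]
  · rw [abs_of_neg hu, abs_of_neg hv, abs_of_neg (by linarith)]; ring

private lemma hbound (u v : ℝ) (hu : |u| ≤ 1) (hv : |v| ≤ 1) (h : 0 ≤ u * v) :
    |u - v| ≤ 1 := by
  rw [abs_le] at hu hv ⊢
  rcases mul_nonneg_iff.mp h with ⟨h1, h2⟩ | ⟨h1, h2⟩ <;> constructor <;> linarith

private lemma aux (a b x y : ℝ) (ha : |a| ≤ 1) (hb : |b| ≤ 1) (hx : |x| ≤ 1)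
    (hy : |y| ≤ 1) :
    (1 < max |a + b| |x + y| ∧ 1 < max |a - b| |x - y|) ↔
      (1 < |a| + |b| ∧ 1 < |x| + |y| ∧ a * b * x * y < 0) := by
  have key : ∀ u v : ℝ, |u| ≤ 1 → |v| ≤ 1 → 1 < |u + v| → 1 < |u - v| → False := by
    intro u v h1 h2 h3 h4
    rw [abs_le] at h1 h2
    rw [lt_abs] at h3 h4
    rcases h3 with h3 | h3 <;> rcases h4 with h4 | h4 <;> linarith
  constructor
  · rintro ⟨h1, h2⟩
    rw [lt_max_iff] at h1 h2
    have hA : 1 < |a| + |b| := by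
      by_contra h
      push_neg at h
      have e1 : |a + b| ≤ 1 := le_trans (abs_add_le a b) h
      have e2 : |a - b| ≤ 1 := le_trans (abs_sub a b) h
      have f1 : 1 < |x + y| := by rcases h1 with h1 | h1; exacts [absurd h1 (by linarith), h1]
      have f2 : 1 < |x - y| := by rcases h2 with h2 | h2; exacts [absurd h2 (by linarith), h2]
      exact key x y hx hy f1 f2
    have hB : 1 < |x| + |y| := by
      by_contra h
      push_neg at h
      have e1 : |x + y| ≤ 1 := le_trans (abs_add_le x y) h
      have e2 : |x - y| ≤ 1 := le_trans (abs_sub x y) h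
      have f1 : 1 < |a + b| := by rcases h1 with h1 | h1; exacts [h1, absurd h1 (by linarith)]
      have f2 : 1 < |a - b| := by rcases h2 with h2 | h2; exacts [h2, absurd h2 (by linarith)]
      exact key a b ha hb f1 f2
    refine ⟨hA, hB, ?_⟩
    by_contra h
    push_neg at h
    have ha0 : a ≠ 0 := by
      intro h0; rw [h0, abs_zero] at hA; linarith
    have hb0 : b ≠ 0 := by
      intro h0; rw [h0, abs_zero] at hA; linarith
    have hx0 : x ≠ 0 := by
      intro h0; rw [h0, abs_zero] at hB; linarith
    have hy0 : y ≠ 0 := by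
      intro h0; rw [h0, abs_zero] at hB; linarith
    rcases lt_trichotomy (a * b) 0 with hab | hab | hab
    · have hxy : x * y < 0 := by
        rcases lt_trichotomy (x * y) 0 with h' | h' | h'
        · exact h'
        · exact absurd h' (mul_ne_zero hx0 hy0)
        · nlinarith
      -- opposite-sign pair gives |a+b| ≤ 1 and |x+y| ≤ 1
      have e1 : |a + b| ≤ 1 := by
        have := hbound a (-b) ha (by rwa [abs_neg]) (by nlinarith)
        simpa using this
      have e2 : |x + y| ≤ 1 := by
        have := hbound x (-y) hx (by rwa [abs_neg]) (by nlinarith)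
        simpa using this
      rcases h1 with h1 | h1 <;> linarith
    · exact mul_ne_zero ha0 hb0 hab
    · have hxy : 0 < x * y := by
        rcases lt_trichotomy (x * y) 0 with h' | h' | h'
        · nlinarith
        · exact absurd h' (mul_ne_zero hx0 hy0)
        · exact h'
      have e1 : |a - b| ≤ 1 := hbound a b ha hb (le_of_lt hab)
      have e2 : |x - y| ≤ 1 := hbound x y hx hy (le_of_lt hxy)
      rcases h2 with h2 | h2 <;> linarith
  · rintro ⟨hA, hB, hP⟩
    have ha0 : a ≠ 0 := by
      intro h0; rw [h0] at hP; simp at hP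
    rcases lt_trichotomy (a * b) 0 with hab | hab | hab
    · have hxy : 0 < x * y := by nlinarith
      have e1 : |a - b| = |a| + |b| := by
        have := hsame a (-b) (by nlinarith)
        simpa [sub_eq_add_neg] using this
      have e2 : |x + y| = |x| + |y| := hsame x y hxy
      constructor
      · rw [lt_max_iff]; right; rw [e2]; exact hB
      · rw [lt_max_iff]; left; rw [e1]; exact hA
    · rw [hab] at hP; simp at hP
    · have hxy : x * y < 0 := by nlinarith
      have e1 : |a + b| = |a| + |b| := hsame a b hab
      have e2 : |x - y| = |x| + |y| := by
        have := hsame x (-y) (by nlinarith)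
        simpa [sub_eq_add_neg] using this
      constructor
      · rw [lt_max_iff]; left; rw [e1]; exact hA
      · rw [lt_max_iff]; right; rw [e2]; exact hB

theorem stmt_0 (c₁ c₂ : ℂ)
    (h₁ : max |c₁.re| |c₁.im| ≤ 1) (h₂ : max |c₂.re| |c₂.im| ≤ 1) :
    (1 < max |(c₁ + c₂).re| |(c₁ + c₂).im| ∧ 1 < max |(c₁ - c₂).re| |(c₁ - c₂).im|) ↔
      (1 < |c₁.re| + |c₂.re| ∧ 1 < |c₁.im| + |c₂.im| ∧ c₁.re * c₂.re * c₁.im * c₂.im < 0) := by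
  rw [max_le_iff] at h₁ h₂
  simpa [Complex.add_re, Complex.add_im, Complex.sub_re, Complex.sub_im] using
    aux c₁.re c₂.re c₁.im c₂.im h₁.1 h₂.1 h₁.2 h₂.2
end

section
/- Let c₁, c₂, c₃, c₄, c₅ be complex numbers with ‖cₙ‖ ≤ 1 for all 1 ≤ n ≤ 5, and such that for each 1 ≤ n ≤ 4 both ‖cₙ + cₙ₊₁‖ > 1 and ‖cₙ - cₙ₊₁‖ > 1. Then there exist signs x₁, ..., x₅ ∈ {-1, 1} such that ‖x₁c₁ + x₂c₂ + x₃c₃ + x₄c₄ + x₅c₅‖ ≤ 2. -/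
open Complex Finset

private lemma pm_mul {x y : ℝ} (hx : x = 1 ∨ x = -1) (hy : y = 1 ∨ y = -1) :
    x * y = 1 ∨ x * y = -1 := by
  rcases hx with h | h <;> rcases hy with h' | h' <;> simp [h, h']

private lemma pm_neg {x : ℝ} (hx : x = 1 ∨ x = -1) : -x = 1 ∨ -x = -1 := by
  rcases hx with h | h <;> simp [h]

private lemma pm_sq {x : ℝ} (hx : x = 1 ∨ x = -1) : x * x = 1 := by
  rcases hx with h | h <;> rw [h] <;> norm_num

private lemma pm_abs {x : ℝ} (hx : x = 1 ∨ x = -1) (y : ℝ) : |x * y| = |y| := by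
  rcases hx with h | h <;> simp [h]

private lemma notboth {u u' : ℝ} (hu : |u| ≤ 1) (hu' : |u'| ≤ 1) (h : 1 < |u + u'|) :
    |u - u'| ≤ 1 := by
  rcases abs_le.mp hu with ⟨h1, h2⟩
  rcases abs_le.mp hu' with ⟨h3, h4⟩
  rcases lt_abs.mp h with h | h <;> rw [abs_le] <;> constructor <;> linarith

private lemma pospair {u u' : ℝ} (hu : |u| ≤ 1) (hu' : |u'| ≤ 1) (h : 1 < |u + u'|) :
    0 < u * u' := by
  rcases abs_le.mp hu with ⟨h1, h2⟩
  rcases abs_le.mp hu' with ⟨h3, h4⟩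
  rcases lt_abs.mp h with h | h
  · have hu0 : 0 < u := by linarith
    have hu'0 : 0 < u' := by linarith
    exact mul_pos hu0 hu'0
  · have hu0 : u < 0 := by linarith
    have hu'0 : u' < 0 := by linarith
    exact mul_pos_of_neg_of_neg hu0 hu'0

private lemma pos_left {x y : ℝ} (h : 0 < x * y) (hy : 0 < y) : x < 0 → False := by
  intro hx; nlinarith

private lemma pair (u v u' v' : ℝ) (hu : |u| ≤ 1) (hv : |v| ≤ 1) (hu' : |u'| ≤ 1)
    (hv' : |v'| ≤ 1) (h1 : 1 < max |u + u'| |v + v'|) (h2 : 1 < max |u - u'| |v - v'|) :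
    ∃ e : ℝ, (e = 1 ∨ e = -1) ∧ 0 < u * (e * u') ∧ 1 < |u + e * u'| ∧
      v * (e * v') < 0 ∧ 1 < |v - e * v'| := by
  have hnu' : |(-u')| ≤ 1 := by rwa [abs_neg]
  have hnv' : |(-v')| ≤ 1 := by rwa [abs_neg]
  rcases lt_max_iff.mp h1 with h | h
  · have hud : |u - u'| ≤ 1 := notboth hu hu' h
    have hvd : 1 < |v - v'| := by
      rcases lt_max_iff.mp h2 with h' | h'
      · linarith
      · exact h'
    refine ⟨1, Or.inl rfl, by simpa using pospair hu hu' h, by simpa using h, ?_, by simpa using hvd⟩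
    have : 0 < v * (-v') := pospair hv hnv' (by rwa [← sub_eq_add_neg])
    nlinarith
  · have hvd : |v - v'| ≤ 1 := notboth hv hv' h
    have hud : 1 < |u - u'| := by
      rcases lt_max_iff.mp h2 with h' | h'
      · exact h'
      · linarith
    refine ⟨-1, Or.inr rfl, ?_, ?_, ?_, ?_⟩
    · have : 0 < u * (-u') := pospair hu hnu' (by rwa [← sub_eq_add_neg])
      nlinarith
    · rw [show u + (-1) * u' = u - u' from by ring]; exact hud
    · have : 0 < v * v' := pospair hv hv' h
      nlinarith
    · rw [show v - (-1) * v' = v + v' from by ring]; exact h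

private lemma sum5re (A1 A2 A3 A4 A5 : ℝ)
    (h1 : |A1| ≤ 1) (h2 : |A2| ≤ 1) (h3 : |A3| ≤ 1) (h4 : |A4| ≤ 1) (h5 : |A5| ≤ 1)
    (p1 : 0 < A1 * A2) (p2 : 0 < A2 * A3) (p3 : 0 < A3 * A4) (p4 : 0 < A4 * A5)
    (q : 1 < |A3 + A4|) : |A1 + A2 - A3 - A4 + A5| ≤ 2 := by
  rcases abs_le.mp h1 with ⟨a1, b1⟩
  rcases abs_le.mp h2 with ⟨a2, b2⟩
  rcases abs_le.mp h3 with ⟨a3, b3⟩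
  rcases abs_le.mp h4 with ⟨a4, b4⟩
  rcases abs_le.mp h5 with ⟨a5, b5⟩
  rcases lt_abs.mp q with hq | hq
  · have hA3 : 0 < A3 := by linarith
    have hA4 : 0 < A4 := by linarith
    have hA2 : 0 < A2 := by nlinarith
    have hA1 : 0 < A1 := by nlinarith
    have hA5 : 0 < A5 := by nlinarith
    rw [abs_le]; constructor <;> linarith
  · have hA3 : A3 < 0 := by linarith
    have hA4 : A4 < 0 := by linarith
    have hA2 : A2 < 0 := by nlinarith
    have hA1 : A1 < 0 := by nlinarith
    have hA5 : A5 < 0 := by nlinarith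
    rw [abs_le]; constructor <;> linarith

private lemma sum5im (B1 B2 B3 B4 B5 : ℝ)
    (h1 : |B1| ≤ 1) (h2 : |B2| ≤ 1) (h3 : |B3| ≤ 1) (h4 : |B4| ≤ 1) (h5 : |B5| ≤ 1)
    (n1 : B1 * B2 < 0) (n2 : B2 * B3 < 0) (n3 : B3 * B4 < 0) (n4 : B4 * B5 < 0)
    (q : 1 < |B2 - B3|) : |B1 + B2 - B3 - B4 + B5| ≤ 2 := by
  rcases abs_le.mp h1 with ⟨a1, b1⟩
  rcases abs_le.mp h2 with ⟨a2, b2⟩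
  rcases abs_le.mp h3 with ⟨a3, b3⟩
  rcases abs_le.mp h4 with ⟨a4, b4⟩
  rcases abs_le.mp h5 with ⟨a5, b5⟩
  rcases lt_abs.mp q with hq | hq
  · have hB2 : 0 < B2 := by linarith
    have hB3 : B3 < 0 := by linarith
    have hB1 : B1 < 0 := by nlinarith
    have hB4 : 0 < B4 := by nlinarith
    have hB5 : B5 < 0 := by nlinarith
    rw [abs_le]; constructor <;> linarith
  · have hB2 : B2 < 0 := by linarith
    have hB3 : 0 < B3 := by linarith
    have hB1 : 0 < B1 := by nlinarith
    have hB4 : B4 < 0 := by nlinarith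
    have hB5 : 0 < B5 := by nlinarith
    rw [abs_le]; constructor <;> linarith

theorem stmt_1 (c : Fin 5 → ℂ)
    (hle : ∀ n, max |(c n).re| |(c n).im| ≤ 1)
    (hadd : ∀ n : Fin 4, 1 < max |(c n.castSucc + c n.succ).re| |(c n.castSucc + c n.succ).im|)
    (hsub : ∀ n : Fin 4, 1 < max |(c n.castSucc - c n.succ).re| |(c n.castSucc - c n.succ).im|) :
    ∃ x : Fin 5 → ℝ, (∀ n, x n = 1 ∨ x n = -1) ∧
      max |(∑ n, (x n : ℂ) * c n).re| |(∑ n, (x n : ℂ) * c n).im| ≤ 2 := by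
  have hA : ∀ n, |(c n).re| ≤ 1 := fun n => (max_le_iff.mp (hle n)).1
  have hB : ∀ n, |(c n).im| ≤ 1 := fun n => (max_le_iff.mp (hle n)).2
  have key : ∀ n : Fin 4, ∃ e : ℝ, (e = 1 ∨ e = -1) ∧
      0 < (c n.castSucc).re * (e * (c n.succ).re) ∧
      1 < |(c n.castSucc).re + e * (c n.succ).re| ∧
      (c n.castSucc).im * (e * (c n.succ).im) < 0 ∧
      1 < |(c n.castSucc).im - e * (c n.succ).im| := by
    intro n
    have h1 := hadd n
    have h2 := hsub n
    simp only [Complex.add_re, Complex.add_im, Complex.sub_re, Complex.sub_im] at h1 h2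
    exact pair _ _ _ _ (hA _) (hB _) (hA _) (hB _) h1 h2
  obtain ⟨e1, he1, p1, q1, r1, s1⟩ := key 0
  obtain ⟨e2, he2, p2, q2, r2, s2⟩ := key 1
  obtain ⟨e3, he3, p3, q3, r3, s3⟩ := key 2
  obtain ⟨e4, he4, p4, q4, r4, s4⟩ := key 3
  have c01 : (0 : Fin 4).castSucc = (0 : Fin 5) := rfl
  have c02 : (0 : Fin 4).succ = (1 : Fin 5) := rfl
  have c11 : (1 : Fin 4).castSucc = (1 : Fin 5) := rfl
  have c12 : (1 : Fin 4).succ = (2 : Fin 5) := rfl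
  have c21 : (2 : Fin 4).castSucc = (2 : Fin 5) := rfl
  have c22 : (2 : Fin 4).succ = (3 : Fin 5) := rfl
  have c31 : (3 : Fin 4).castSucc = (3 : Fin 5) := rfl
  have c32 : (3 : Fin 4).succ = (4 : Fin 5) := rfl
  rw [c01, c02] at p1 q1 r1 s1
  rw [c11, c12] at p2 q2 r2 s2
  rw [c21, c22] at p3 q3 r3 s3
  rw [c31, c32] at p4 q4 r4 s4
  have he1sq := pm_sq he1
  have h12 := pm_mul he1 he2
  have h12sq := pm_sq h12
  have h123 := pm_mul h12 he3
  have h123sq := pm_sq h123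
  have h1234 := pm_mul h123 he4
  refine ⟨![1, e1, -(e1 * e2), -(e1 * e2 * e3), e1 * e2 * e3 * e4], ?_, ?_⟩
  · intro n
    fin_cases n
    · left; rfl
    · exact he1
    · simpa using pm_neg h12
    · simpa using pm_neg h123
    · simpa using h1234
  · have sumre : (∑ n, ((![1, e1, -(e1 * e2), -(e1 * e2 * e3), e1 * e2 * e3 * e4] n : ℝ) : ℂ) * c n).re =
        (c 0).re + e1 * (c 1).re - e1 * e2 * (c 2).re - e1 * e2 * e3 * (c 3).re
          + e1 * e2 * e3 * e4 * (c 4).re := by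
      simp [Fin.sum_univ_five, Complex.add_re, Complex.mul_re, Complex.ofReal_re,
        Complex.ofReal_im]
      ring
    have sumim : (∑ n, ((![1, e1, -(e1 * e2), -(e1 * e2 * e3), e1 * e2 * e3 * e4] n : ℝ) : ℂ) * c n).im =
        (c 0).im + e1 * (c 1).im - e1 * e2 * (c 2).im - e1 * e2 * e3 * (c 3).im
          + e1 * e2 * e3 * e4 * (c 4).im := by
      simp [Fin.sum_univ_five, Complex.add_im, Complex.mul_im, Complex.ofReal_re,
        Complex.ofReal_im]
      ring
    rw [sumre, sumim]
    have hre : |(c 0).re + e1 * (c 1).re - e1 * e2 * (c 2).re - e1 * e2 * e3 * (c 3).re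
        + e1 * e2 * e3 * e4 * (c 4).re| ≤ 2 := by
      apply sum5re ((c 0).re) (e1 * (c 1).re) (e1 * e2 * (c 2).re) (e1 * e2 * e3 * (c 3).re)
        (e1 * e2 * e3 * e4 * (c 4).re)
      · exact hA 0
      · rw [pm_abs he1]; exact hA 1
      · rw [pm_abs h12]; exact hA 2
      · rw [pm_abs h123]; exact hA 3
      · rw [pm_abs h1234]; exact hA 4
      · exact p1
      · have : (e1 * (c 1).re) * (e1 * e2 * (c 2).re) = (e1 * e1) * ((c 1).re * (e2 * (c 2).re)) := by ring
        rw [this, he1sq, one_mul]; exact p2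
      · have : (e1 * e2 * (c 2).re) * (e1 * e2 * e3 * (c 3).re)
            = ((e1 * e2) * (e1 * e2)) * ((c 2).re * (e3 * (c 3).re)) := by ring
        rw [this, h12sq, one_mul]; exact p3
      · have : (e1 * e2 * e3 * (c 3).re) * (e1 * e2 * e3 * e4 * (c 4).re)
            = ((e1 * e2 * e3) * (e1 * e2 * e3)) * ((c 3).re * (e4 * (c 4).re)) := by ring
        rw [this, h123sq, one_mul]; exact p4
      · rw [show e1 * e2 * (c 2).re + e1 * e2 * e3 * (c 3).re
            = (e1 * e2) * ((c 2).re + e3 * (c 3).re) from by ring, pm_abs h12]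
        exact q3
    have him : |(c 0).im + e1 * (c 1).im - e1 * e2 * (c 2).im - e1 * e2 * e3 * (c 3).im
        + e1 * e2 * e3 * e4 * (c 4).im| ≤ 2 := by
      apply sum5im ((c 0).im) (e1 * (c 1).im) (e1 * e2 * (c 2).im) (e1 * e2 * e3 * (c 3).im)
        (e1 * e2 * e3 * e4 * (c 4).im)
      · exact hB 0
      · rw [pm_abs he1]; exact hB 1
      · rw [pm_abs h12]; exact hB 2
      · rw [pm_abs h123]; exact hB 3
      · rw [pm_abs h1234]; exact hB 4
      · exact r1
      · have : (e1 * (c 1).im) * (e1 * e2 * (c 2).im) = (e1 * e1) * ((c 1).im * (e2 * (c 2).im)) := by ring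
        rw [this, he1sq, one_mul]; exact r2
      · have : (e1 * e2 * (c 2).im) * (e1 * e2 * e3 * (c 3).im)
            = ((e1 * e2) * (e1 * e2)) * ((c 2).im * (e3 * (c 3).im)) := by ring
        rw [this, h12sq, one_mul]; exact r3
      · have : (e1 * e2 * e3 * (c 3).im) * (e1 * e2 * e3 * e4 * (c 4).im)
            = ((e1 * e2 * e3) * (e1 * e2 * e3)) * ((c 3).im * (e4 * (c 4).im)) := by ring
        rw [this, h123sq, one_mul]; exact r4
      · rw [show e1 * (c 1).im - e1 * e2 * (c 2).im = e1 * ((c 1).im - e2 * (c 2).im) from by ring,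
          pm_abs he1]
        exact s2
    exact max_le hre him
end

section
/- Let c₁, ..., c_N be complex numbers with ‖cₙ‖ ≤ 1 for all n. Then there exist signs x₁, ..., x_N ∈ {-1, 1} such that for every 1 ≤ k ≤ N, ‖∑_{n=1}^{k} xₙcₙ‖ ≤ 5. -/
open Complex Finset

lemma dep3 (v : Fin 3 → ℂ) : ∃ g : Fin 3 → ℝ, (∑ i, g i • v i = 0) ∧ ∃ i, g i ≠ 0 := by
  have h : ¬ LinearIndependent ℝ v := by
    intro h
    have := h.fintype_card_le_finrank
    simp [Complex.finrank_real_complex] at this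
  rw [Fintype.not_linearIndependent_iff] at h
  exact h

lemma hit (l w : Fin 3 → ℝ) (hl : ∀ i, |l i| ≤ 1) (hw : ∃ i, w i ≠ 0) :
    ∃ t : ℝ, (∀ i, |l i + t * w i| ≤ 1) ∧ ∃ i, |l i + t * w i| = 1 := by
  classical
  set S : Finset (Fin 3) := Finset.univ.filter (fun i => w i ≠ 0) with hS
  have hSne : S.Nonempty := by
    obtain ⟨i, hi⟩ := hw
    exact ⟨i, by simp [hS, hi]⟩
  set τ : Fin 3 → ℝ := fun i => (if 0 < w i then (1 - l i) else (-1 - l i)) / w i with hτ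
  obtain ⟨i0, hi0S, hi0min⟩ := S.exists_min_image τ hSne
  have hwi0 : w i0 ≠ 0 := by simpa [hS] using hi0S
  have hτnonneg : ∀ i ∈ S, 0 ≤ τ i := by
    intro i hiS
    have hwi : w i ≠ 0 := by simpa [hS] using hiS
    rcases lt_or_gt_of_ne hwi with hneg | hpos
    · have : -1 - l i ≤ 0 := by have := (abs_le.mp (hl i)).1; linarith
      simp only [hτ, if_neg (not_lt.mpr hneg.le)]
      exact div_nonneg_of_nonpos this hneg.le
    · have : 0 ≤ 1 - l i := by have := (abs_le.mp (hl i)).2; linarith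
      simp only [hτ, if_pos hpos]
      exact div_nonneg this hpos.le
  set t := τ i0 with ht
  have ht0 : 0 ≤ t := hτnonneg i0 hi0S
  refine ⟨t, ?_, ⟨i0, ?_⟩⟩
  · intro i
    by_cases hwi : w i = 0
    · simpa [hwi] using hl i
    · have hiS : i ∈ S := by simp [hS, hwi]
      have htle : t ≤ τ i := hi0min i hiS
      have h1 := (abs_le.mp (hl i)).1
      have h2 := (abs_le.mp (hl i)).2
      rcases lt_or_gt_of_ne hwi with hneg | hpos
      · have hτi : τ i = (-1 - l i) / w i := by simp [hτ, not_lt.mpr hneg.le]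
        rw [hτi] at htle
        have : (-1 - l i) ≤ t * w i := by
          have := (le_div_iff_of_neg hneg).mp htle
          linarith
        have hup : t * w i ≤ 0 := mul_nonpos_of_nonneg_of_nonpos ht0 hneg.le
        rw [abs_le]; constructor <;> linarith
      · have hτi : τ i = (1 - l i) / w i := by simp [hτ, hpos]
        rw [hτi] at htle
        have : t * w i ≤ 1 - l i := (le_div_iff₀ hpos).mp htle
        have hlow : 0 ≤ t * w i := mul_nonneg ht0 hpos.le
        rw [abs_le]; constructor <;> linarith
  · have : t * w i0 = (if 0 < w i0 then (1 - l i0) else (-1 - l i0)) := by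
      rw [ht, hτ]; field_simp
    rcases lt_or_gt_of_ne hwi0 with hneg | hpos
    · rw [this, if_neg (not_lt.mpr hneg.le)]; ring_nf; simp
    · rw [this, if_pos hpos]; ring_nf; simp

lemma reduce (v : Fin 3 → ℂ) (l : Fin 3 → ℝ) (hl : ∀ i, |l i| ≤ 1) :
    ∃ m : Fin 3 → ℝ, (∀ i, |m i| ≤ 1) ∧
      (∑ i, (m i : ℂ) * v i = ∑ i, (l i : ℂ) * v i) ∧ ∃ i, |m i| = 1 := by
  obtain ⟨g, hg0, hgne⟩ := dep3 v
  obtain ⟨t, hb, hone⟩ := hit l g hl hgne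
  refine ⟨fun i => l i + t * g i, hb, ?_, hone⟩
  have : ∑ i, ((l i + t * g i : ℝ) : ℂ) * v i
      = ∑ i, ((l i : ℂ) * v i + (t : ℂ) * ((g i : ℝ) • v i)) := by
    apply Finset.sum_congr rfl
    intro i _
    push_cast [Complex.real_smul]
    ring
  rw [this, Finset.sum_add_distrib, ← Finset.mul_sum, hg0]
  simp

def BGInv (c : ℕ → ℂ) (t : ℕ) (f : ℕ → ℝ) : Prop :=
  (∀ i, |f i| ≤ 1) ∧ (∀ i, i ∉ Finset.Icc 1 t → f i = 0) ∧
  (∑ i ∈ Finset.Icc 1 t, (f i : ℂ) * c i = 0) ∧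
  ((Finset.Icc 1 t).filter (fun i => |f i| < 1)).card ≤ 2

lemma icc_succ (t : ℕ) : Finset.Icc 1 (t+1) = insert (t+1) (Finset.Icc 1 t) := by
  ext n; simp [Finset.mem_Icc, Finset.mem_insert]; omega

lemma step (c : ℕ → ℂ) (t : ℕ) (f : ℕ → ℝ) (hf : BGInv c t f) :
    ∃ g, BGInv c (t+1) g ∧ ∀ i, |f i| = 1 → g i = f i := by
  classical
  obtain ⟨h1, h2, h3, h4⟩ := hf
  set A := (Finset.Icc 1 t).filter (fun i => |f i| < 1) with hA
  have hft1 : f (t+1) = 0 := h2 _ (by simp)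
  have hsub : Finset.Icc 1 t ⊆ Finset.Icc 1 (t+1) := by
    apply Finset.Icc_subset_Icc le_rfl; omega
  have ht1mem : (t+1) ∉ Finset.Icc 1 t := by simp
  have hsumup : ∑ i ∈ Finset.Icc 1 (t+1), (f i : ℂ) * c i = 0 := by
    rw [icc_succ, Finset.sum_insert ht1mem, h3, hft1]; simp
  by_cases hAcard : A.card ≤ 1
  · refine ⟨f, ⟨h1, ?_, hsumup, ?_⟩, fun i _ => rfl⟩
    · intro i hi
      exact h2 i (fun h => hi (hsub h))
    · have : (Finset.Icc 1 (t+1)).filter (fun i => |f i| < 1) ⊆ insert (t+1) A := by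
        intro n hn
        simp only [Finset.mem_filter, Finset.mem_Icc] at hn
        rcases Nat.lt_or_ge n (t+1) with h | h
        · apply Finset.mem_insert_of_mem
          rw [hA]
          refine Finset.mem_filter.mpr ⟨?_, hn.2⟩
          simp only [Finset.mem_Icc]
          omega
        · have hnt : n = t+1 := by omega
          rw [hnt]
          exact Finset.mem_insert_self _ _
      calc ((Finset.Icc 1 (t+1)).filter (fun i => |f i| < 1)).card
          ≤ (insert (t+1) A).card := Finset.card_le_card this
        _ ≤ A.card + 1 := Finset.card_insert_le _ _
        _ ≤ 2 := by omega
  · have hA2 : A.card = 2 := by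
      have : A.card ≤ 2 := h4
      omega
    obtain ⟨i, j, hij, hAij⟩ := Finset.card_eq_two.mp hA2
    have hiA : i ∈ A := by rw [hAij]; simp
    have hjA : j ∈ A := by rw [hAij]; simp
    have hiIcc : i ∈ Finset.Icc 1 t := (Finset.mem_filter.mp hiA).1
    have hjIcc : j ∈ Finset.Icc 1 t := (Finset.mem_filter.mp hjA).1
    have hfi : |f i| < 1 := (Finset.mem_filter.mp hiA).2
    have hfj : |f j| < 1 := (Finset.mem_filter.mp hjA).2
    have hit1 : i ≠ t+1 := by have := (Finset.mem_Icc.mp hiIcc).2; omega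
    have hjt1 : j ≠ t+1 := by have := (Finset.mem_Icc.mp hjIcc).2; omega
    set v : Fin 3 → ℂ := ![c i, c j, c (t+1)] with hv
    set l : Fin 3 → ℝ := ![f i, f j, 0] with hlDef
    have hl : ∀ k, |l k| ≤ 1 := by
      intro k; fin_cases k <;> simp [hlDef] <;> [exact hfi.le; exact hfj.le]
    obtain ⟨m, hm1, hmsum, k0, hk0⟩ := reduce v l hl
    set g : ℕ → ℝ := fun n => if n = i then m 0 else if n = j then m 1 else
      if n = t+1 then m 2 else f n with hg
    have hgi : g i = m 0 := by simp [hg]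
    have hgj : g j = m 1 := by simp [hg, Ne.symm hij, hij]
    have hgt1 : g (t+1) = m 2 := by simp [hg, Ne.symm hit1, Ne.symm hjt1]
    have hgoff : ∀ n, n ≠ i → n ≠ j → n ≠ t+1 → g n = f n := by
      intro n hni hnj hnt; simp [hg, hni, hnj, hnt]
    set T : Finset ℕ := insert i (insert j {t+1}) with hT
    have hiT2 : i ∉ insert j ({t+1} : Finset ℕ) := by simp [hij, hit1]
    have hjT2 : j ∉ ({t+1} : Finset ℕ) := by simp [hjt1]
    have hTsub : T ⊆ Finset.Icc 1 (t+1) := by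
      intro n hn
      simp only [hT, Finset.mem_insert, Finset.mem_singleton] at hn
      rcases hn with rfl | rfl | rfl
      · exact hsub hiIcc
      · exact hsub hjIcc
      · simp [Finset.mem_Icc]
    -- the sum over T
    have hsumT : ∀ h : ℕ → ℂ, ∑ n ∈ T, h n = h i + h j + h (t+1) := by
      intro h
      rw [hT, Finset.sum_insert hiT2, Finset.sum_insert hjT2, Finset.sum_singleton]
      ring
    have hsum3m : (∑ k, (m k : ℂ) * v k) = (m 0 : ℂ) * c i + (m 1 : ℂ) * c j + (m 2 : ℂ) * c (t+1) := by
      rw [Fin.sum_univ_three]; simp [hv]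
    have hsum3l : (∑ k, (l k : ℂ) * v k) = (f i : ℂ) * c i + (f j : ℂ) * c j := by
      rw [Fin.sum_univ_three]; simp [hv, hlDef]
    refine ⟨g, ⟨?_, ?_, ?_, ?_⟩, ?_⟩
    · intro n
      by_cases hni : n = i; · rw [hni, hgi]; exact hm1 0
      by_cases hnj : n = j; · rw [hnj, hgj]; exact hm1 1
      by_cases hnt : n = t+1; · rw [hnt, hgt1]; exact hm1 2
      rw [hgoff n hni hnj hnt]; exact h1 n
    · intro n hn
      have hni : n ≠ i := fun h => hn (h ▸ hsub hiIcc)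
      have hnj : n ≠ j := fun h => hn (h ▸ hsub hjIcc)
      have hnt : n ≠ t+1 := by
        intro h; apply hn; rw [h]; simp [Finset.mem_Icc]
      rw [hgoff n hni hnj hnt]
      exact h2 n (fun h => hn (hsub h))
    · have key : ∑ n ∈ Finset.Icc 1 (t+1), (g n : ℂ) * c n
          = ∑ n ∈ Finset.Icc 1 (t+1), (f n : ℂ) * c n := by
        rw [← Finset.sum_sdiff hTsub, ← Finset.sum_sdiff hTsub]
        congr 1
        · apply Finset.sum_congr rfl
          intro n hn
          simp only [Finset.mem_sdiff, hT, Finset.mem_insert, Finset.mem_singleton] at hn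
          push_neg at hn
          rw [hgoff n hn.2.1 hn.2.2.1 hn.2.2.2]
        · rw [hsumT, hsumT, hgi, hgj, hgt1, hft1]
          have := hmsum
          rw [hsum3m, hsum3l] at this
          rw [this]; simp
      rw [key, hsumup]
    · -- cardinality
      set n0 : ℕ := ![i, j, t+1] k0 with hn0
      have hn0T : n0 ∈ T ∧ g n0 = m k0 := by
        fin_cases k0 <;> simp [hn0, hT, hgi, hgj, hgt1]
      have hfilter : (Finset.Icc 1 (t+1)).filter (fun n => |g n| < 1) ⊆ T.erase n0 := by
        intro n hn
        obtain ⟨hnIcc, hng⟩ := Finset.mem_filter.mp hn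
        have hnT : n ∈ T := by
          by_contra hnT
          simp only [hT, Finset.mem_insert, Finset.mem_singleton] at hnT
          push_neg at hnT
          rw [hgoff n hnT.1 hnT.2.1 hnT.2.2] at hng
          have hnIcc' : n ∈ Finset.Icc 1 t := by
            simp only [Finset.mem_Icc] at hnIcc ⊢
            constructor; · exact hnIcc.1
            · have := hnT.2.2; omega
          have : n ∈ A := Finset.mem_filter.mpr ⟨hnIcc', hng⟩
          rw [hAij] at this
          simp at this
          rcases this with rfl | rfl
          · exact hnT.1 rfl
          · exact hnT.2.1 rfl
        refine Finset.mem_erase.mpr ⟨?_, hnT⟩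
        intro hnn0
        rw [hnn0, hn0T.2, hk0] at hng
        exact lt_irrefl 1 hng
      calc ((Finset.Icc 1 (t+1)).filter (fun n => |g n| < 1)).card
          ≤ (T.erase n0).card := Finset.card_le_card hfilter
        _ = T.card - 1 := Finset.card_erase_of_mem hn0T.1
        _ ≤ 3 - 1 := by
            have : T.card ≤ 3 := by
              calc T.card ≤ (insert j ({t+1} : Finset ℕ)).card + 1 := Finset.card_insert_le _ _
                _ ≤ (({t+1} : Finset ℕ).card + 1) + 1 := by
                    have := Finset.card_insert_le j ({t+1} : Finset ℕ); omega
                _ = 3 := by simp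
            omega
        _ = 2 := rfl
    · intro n hn
      have hni : n ≠ i := fun h => absurd (h ▸ hn) (ne_of_lt hfi)
      have hnj : n ≠ j := fun h => absurd (h ▸ hn) (ne_of_lt hfj)
      have hnt : n ≠ t+1 := fun h => by rw [h, hft1] at hn; simp at hn
      exact hgoff n hni hnj hnt


noncomputable def chain (c : ℕ → ℂ) : (t : ℕ) → {f : ℕ → ℝ // BGInv c t f}
  | 0 => ⟨fun _ => 0, by
      refine ⟨fun i => by simp, fun i _ => rfl, by simp, by simp⟩⟩
  | (t+1) => ⟨Classical.choose (step c t (chain c t).1 (chain c t).2),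
      (Classical.choose_spec (step c t (chain c t).1 (chain c t).2)).1⟩

lemma chain_persist (c : ℕ → ℂ) (t : ℕ) (i : ℕ) (h : |(chain c t).1 i| = 1) :
    (chain c (t+1)).1 i = (chain c t).1 i :=
  (Classical.choose_spec (step c t (chain c t).1 (chain c t).2)).2 i h

lemma chain_persist' (c : ℕ → ℂ) (k m : ℕ) (hkm : k ≤ m) (i : ℕ)
    (h : |(chain c k).1 i| = 1) : (chain c m).1 i = (chain c k).1 i := by
  induction m, hkm using Nat.le_induction with
  | base => rfl
  | succ m hm ih =>
    rw [chain_persist c m i (by rw [ih]; exact h), ih]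

theorem stmt_2 (N : ℕ) (c : ℕ → ℂ)
    (hle : ∀ n, 1 ≤ n → n ≤ N → max |(c n).re| |(c n).im| ≤ 1) :
    ∃ x : ℕ → ℝ, (∀ n, x n = 1 ∨ x n = -1) ∧
      ∀ k, 1 ≤ k → k ≤ N →
        max |(∑ n ∈ Finset.Icc 1 k, (x n : ℂ) * c n).re|
            |(∑ n ∈ Finset.Icc 1 k, (x n : ℂ) * c n).im| ≤ 5 := by
  classical
  set L : ℕ → ℕ → ℝ := fun t => (chain c t).1 with hL
  set x : ℕ → ℝ := fun i => if L N i < 0 then -1 else 1 with hx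
  have hx1 : ∀ n, x n = 1 ∨ x n = -1 := by
    intro n
    by_cases h : L N n < 0
    · right; simp [hx, h]
    · left; simp [hx, h]
  have hxabs : ∀ n, |x n| = 1 := by
    intro n; rcases hx1 n with h | h <;> simp [h]
  have hxL : ∀ k, k ≤ N → ∀ i, |L k i| = 1 → x i = L k i := by
    intro k hk i h
    have hN : L N i = L k i := chain_persist' c k N hk i h
    rcases abs_eq (by norm_num : (0:ℝ) ≤ 1) |>.mp h with h1 | h1
    · rw [h1]
      simp [hx, hN, h1]
    · rw [h1]
      simp [hx, hN, h1]
  refine ⟨x, hx1, ?_⟩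
  intro k hk1 hkN
  obtain ⟨hb1, hb2, hb3, hb4⟩ := (chain c k).2
  set F := (Finset.Icc 1 k).filter (fun i => |L k i| < 1) with hF
  have hFsub : F ⊆ Finset.Icc 1 k := Finset.filter_subset _ _
  -- the sum equals the sum over F of (x i - L k i) * c i
  have hkey : ∑ n ∈ Finset.Icc 1 k, (x n : ℂ) * c n
      = ∑ n ∈ F, ((x n - L k n : ℝ) : ℂ) * c n := by
    have e1 : ∑ n ∈ Finset.Icc 1 k, (x n : ℂ) * c n
        = ∑ n ∈ Finset.Icc 1 k, ((x n - L k n : ℝ) : ℂ) * c n := by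
      rw [eq_comm]
      have : ∀ n ∈ Finset.Icc 1 k, ((x n - L k n : ℝ) : ℂ) * c n
          = (x n : ℂ) * c n - (L k n : ℂ) * c n := by
        intro n _; push_cast; ring
      rw [Finset.sum_congr rfl this, Finset.sum_sub_distrib, hb3, sub_zero]
    rw [e1, eq_comm]
    apply Finset.sum_subset hFsub
    intro n hn hnF
    have h1 : |L k n| = 1 := by
      have := hb1 n
      have hnot : ¬ |L k n| < 1 := by
        intro hlt
        exact hnF (Finset.mem_filter.mpr ⟨hn, hlt⟩)
      linarith [lt_or_eq_of_le this |>.resolve_left hnot]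
    rw [hxL k hkN n h1]
    simp
  have hterm : ∀ n ∈ F, |(((x n - L k n : ℝ) : ℂ) * c n).re| ≤ 2 ∧
      |(((x n - L k n : ℝ) : ℂ) * c n).im| ≤ 2 := by
    intro n hn
    have hnIcc := hFsub hn
    rw [Finset.mem_Icc] at hnIcc
    have hcre : |(c n).re| ≤ 1 :=
      le_trans (le_max_left _ _) (hle n hnIcc.1 (le_trans hnIcc.2 hkN))
    have hcim : |(c n).im| ≤ 1 :=
      le_trans (le_max_right _ _) (hle n hnIcc.1 (le_trans hnIcc.2 hkN))
    have hdiff : |x n - L k n| ≤ 2 := by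
      have := hxabs n
      have := hb1 n
      have h1 := abs_sub_abs_le_abs_sub (x n) (L k n)
      have := abs_sub (x n) (L k n)
      calc |x n - L k n| ≤ |x n| + |L k n| := abs_sub _ _
        _ ≤ 2 := by rw [hxabs n]; linarith [hb1 n]
    constructor
    · have : (((x n - L k n : ℝ) : ℂ) * c n).re = (x n - L k n) * (c n).re := by
        simp [Complex.mul_re]
      rw [this, abs_mul]
      calc |x n - L k n| * |(c n).re| ≤ 2 * 1 := by
            apply mul_le_mul hdiff hcre (abs_nonneg _) (by norm_num)
        _ = 2 := by norm_num
    · have : (((x n - L k n : ℝ) : ℂ) * c n).im = (x n - L k n) * (c n).im := by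
        simp [Complex.mul_im]
      rw [this, abs_mul]
      calc |x n - L k n| * |(c n).im| ≤ 2 * 1 := by
            apply mul_le_mul hdiff hcim (abs_nonneg _) (by norm_num)
        _ = 2 := by norm_num
  have hcard : (F.card : ℝ) ≤ 2 := by exact_mod_cast hb4
  rw [hkey]
  have hre : |(∑ n ∈ F, ((x n - L k n : ℝ) : ℂ) * c n).re| ≤ 4 := by
    rw [Complex.re_sum]
    calc |∑ n ∈ F, (((x n - L k n : ℝ) : ℂ) * c n).re|
        ≤ ∑ n ∈ F, |(((x n - L k n : ℝ) : ℂ) * c n).re| := Finset.abs_sum_le_sum_abs _ _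
      _ ≤ ∑ n ∈ F, 2 := Finset.sum_le_sum (fun n hn => (hterm n hn).1)
      _ = 2 * F.card := by rw [Finset.sum_const]; push_cast; ring
      _ ≤ 4 := by linarith
  have him : |(∑ n ∈ F, ((x n - L k n : ℝ) : ℂ) * c n).im| ≤ 4 := by
    rw [Complex.im_sum]
    calc |∑ n ∈ F, (((x n - L k n : ℝ) : ℂ) * c n).im|
        ≤ ∑ n ∈ F, |(((x n - L k n : ℝ) : ℂ) * c n).im| := Finset.abs_sum_le_sum_abs _ _
      _ ≤ ∑ n ∈ F, 2 := Finset.sum_le_sum (fun n hn => (hterm n hn).2)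
      _ = 2 * F.card := by rw [Finset.sum_const]; push_cast; ring
      _ ≤ 4 := by linarith
  exact max_le (by linarith) (by linarith)
end

section
/- Let (cₙ = aₙ + ibₙ) be a sequence of complex numbers with cₙ → 0 and ∑|cₙ| = ∞. Then there exists t ∈ ℝ ∪ {∞} and a subsequence (c_{n_k}) with ∑_k |c_{n_k}| = ∞ such that a_{n_k}/b_{n_k} → t as k → ∞ (where t = ∞ means the ratios tend to infinity in absolute value). -/
open Complex Filter Topology

lemma aux_block (f : ℕ → ℝ) (hf : ∀ n, 0 ≤ f n) (S : Set ℕ)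
    (hS : ¬ Summable (S.indicator f)) (N : ℕ) :
    ∃ M, N ≤ M ∧ 1 ≤ ∑ i ∈ Finset.Ico N M, S.indicator f i := by
  have hnn : ∀ n, 0 ≤ S.indicator f n := fun n => Set.indicator_nonneg (fun i _ => hf i) n
  have ht : Tendsto (fun n => ∑ i ∈ Finset.range n, S.indicator f i) atTop atTop :=
    (not_summable_iff_tendsto_nat_atTop_of_nonneg hnn).1 hS
  obtain ⟨M, hM1, hM2⟩ :=
    ((ht.eventually_ge_atTop ((∑ i ∈ Finset.range N, S.indicator f i) + 1)).and
      (eventually_ge_atTop N)).exists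
  refine ⟨M, hM2, ?_⟩
  have h := Finset.sum_Ico_eq_sub (fun i => S.indicator f i) hM2
  rw [h]
  linarith

lemma aux_subseq (f : ℕ → ℝ) (hf : ∀ n, 0 ≤ f n) (S : ℕ → Set ℕ)
    (hmono : ∀ m, S (m+1) ⊆ S m)
    (hS : ∀ m, ¬ Summable ((S m).indicator f)) :
    ∃ nk : ℕ → ℕ, StrictMono nk ∧ ¬ Summable (fun k => f (nk k)) ∧
      (∀ k, nk k ∈ S 0) ∧ (∀ m, ∀ᶠ k in atTop, nk k ∈ S m) := by
  have hanti : Antitone S := antitone_nat_of_succ_le hmono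
  choose G hG1 hG2 using fun m N => aux_block f hf (S m) (hS m) N
  set N : ℕ → ℕ := fun m => Nat.rec 0 (fun k ih => G k ih) m with hNdef
  have hNsucc : ∀ m, N (m+1) = G m (N m) := fun m => rfl
  have hNle : ∀ m, N m ≤ N (m+1) := fun m => by rw [hNsucc]; exact hG1 m (N m)
  have hNblock : ∀ m, 1 ≤ ∑ i ∈ Finset.Ico (N m) (N (m+1)), (S m).indicator f i := fun m => by
    rw [hNsucc]; exact hG2 m (N m)
  have hNmono : Monotone N := monotone_nat_of_le_succ hNle
  set T : Set ℕ := {n | ∃ m, n ∈ S m ∧ n ∈ Set.Ico (N m) (N (m+1))} with hTdef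
  have hblocknon : ∀ m, ∃ n, n ∈ Set.Ico (N m) (N (m+1)) ∧ n ∈ S m := by
    intro m
    have h1 := hNblock m
    have h2 : ∃ i ∈ Finset.Ico (N m) (N (m+1)), (S m).indicator f i ≠ 0 := by
      by_contra h
      push_neg at h
      have : ∑ i ∈ Finset.Ico (N m) (N (m+1)), (S m).indicator f i = 0 := Finset.sum_eq_zero h
      linarith
    obtain ⟨i, hi1, hi2⟩ := h2
    refine ⟨i, by simpa using hi1, ?_⟩
    by_contra h
    exact hi2 (Set.indicator_of_notMem h f)
  have hNlt : ∀ m, N m < N (m+1) := by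
    intro m
    obtain ⟨n, hn, _⟩ := hblocknon m
    exact lt_of_le_of_lt hn.1 hn.2
  have hNsm : StrictMono N := strictMono_nat_of_lt_succ hNlt
  have hTinf : T.Infinite := by
    apply Set.infinite_of_not_bddAbove
    rintro ⟨B, hB⟩
    obtain ⟨n, hn, hnS⟩ := hblocknon (B+1)
    have hmemT : n ∈ T := ⟨B+1, hnS, hn⟩
    have h1 : n ≤ B := hB hmemT
    have h2 : B+1 ≤ N (B+1) := hNsm.le_apply
    have h3 : N (B+1) ≤ n := hn.1
    omega
  have hinf : (setOf (· ∈ T)).Infinite := hTinf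
  refine ⟨Nat.nth (· ∈ T), Nat.nth_strictMono hinf, ?_, ?_, ?_⟩
  · -- not summable
    intro hsum
    set nk := Nat.nth (· ∈ T)
    have hmem : ∀ k, nk k ∈ T := fun k => Nat.nth_mem_of_infinite hinf k
    have hbij : Function.Bijective (fun k => (⟨nk k, hmem k⟩ : T)) := by
      constructor
      · intro a b h
        exact (Nat.nth_strictMono hinf).injective (congrArg Subtype.val h)
      · rintro ⟨x, hx⟩
        have : x ∈ Set.range nk := by
          rw [Nat.range_nth_of_infinite hinf]; exact hx
        obtain ⟨k, hk⟩ := this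
        exact ⟨k, Subtype.ext hk⟩
    have hsub : Summable (fun x : T => f x) :=
      (Equiv.summable_iff (Equiv.ofBijective _ hbij)).1 hsum
    have hind : Summable (T.indicator f) := summable_subtype_iff_indicator.1 hsub
    -- partial sums over blocks are unbounded
    have key : ∀ m : ℕ, (m:ℝ) ≤ ∑ i ∈ Finset.Ico (N 0) (N m), T.indicator f i := by
      intro m
      induction m with
      | zero => simp
      | succ m ih =>
        have h1 : ∑ i ∈ Finset.Ico (N 0) (N m), T.indicator f i
            + ∑ i ∈ Finset.Ico (N m) (N (m+1)), T.indicator f i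
            = ∑ i ∈ Finset.Ico (N 0) (N (m+1)), T.indicator f i :=
          Finset.sum_Ico_consecutive _ (hNmono (Nat.zero_le m)) (hNle m)
        have h2 : ∑ i ∈ Finset.Ico (N m) (N (m+1)), (S m).indicator f i
            ≤ ∑ i ∈ Finset.Ico (N m) (N (m+1)), T.indicator f i := by
          apply Finset.sum_le_sum
          intro i hi
          simp only [Finset.mem_Ico] at hi
          by_cases hiS : i ∈ S m
          · rw [Set.indicator_of_mem hiS,
              Set.indicator_of_mem (show i ∈ T from ⟨m, hiS, hi.1, hi.2⟩)]
          · rw [Set.indicator_of_notMem hiS]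
            exact Set.indicator_nonneg (fun j _ => hf j) i
        have h3 := hNblock m
        push_cast
        linarith
    obtain ⟨m, hm⟩ := exists_nat_gt (∑' i, T.indicator f i)
    have h4 := key m
    have h5 : ∑ i ∈ Finset.Ico (N 0) (N m), T.indicator f i ≤ ∑' i, T.indicator f i :=
      Summable.sum_le_tsum _ (fun i _ => Set.indicator_nonneg (fun j _ => hf j) i) hind
    linarith
  · -- always in S 0
    intro k
    obtain ⟨m, hm1, _⟩ := Nat.nth_mem_of_infinite hinf k
    exact hanti (Nat.zero_le m) hm1
  · -- eventually in S m
    intro m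
    filter_upwards [eventually_ge_atTop (N m)] with k hk
    have hk2 : N m ≤ Nat.nth (· ∈ T) k :=
      le_trans hk (Nat.nth_strictMono hinf).le_apply
    obtain ⟨j, hj1, hj2⟩ := Nat.nth_mem_of_infinite hinf k
    have hmle : m ≤ j := by
      by_contra h
      push_neg at h
      have h1 : N (j+1) ≤ N m := hNmono (Nat.succ_le_of_lt h)
      have h2 := hj2.2
      omega
    exact hanti hmle hj1

lemma aux_heavy (f : ℕ → ℝ) (hf : ∀ n, 0 ≤ f n) (d : ℕ → ℂ)
    (hd : ∀ n, d n ∈ Metric.sphere (0:ℂ) 1) (hns : ¬ Summable f) :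
    ∃ z ∈ Metric.sphere (0:ℂ) 1, ∀ ε > 0,
      ¬ Summable (Set.indicator {n | dist (d n) z < ε} f) := by
  by_contra h
  push_neg at h
  choose ε hε hsum using fun (z : Metric.sphere (0:ℂ) 1) => h z z.2
  have hcov : Metric.sphere (0:ℂ) 1 ⊆
      ⋃ z : Metric.sphere (0:ℂ) 1, Metric.ball (z:ℂ) (ε z) := by
    intro x hx
    exact Set.mem_iUnion.2 ⟨⟨x, hx⟩, Metric.mem_ball_self (hε _)⟩
  obtain ⟨t, ht⟩ := (isCompact_sphere (0:ℂ) 1).elim_finite_subcover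
    (fun z : Metric.sphere (0:ℂ) 1 => Metric.ball (z:ℂ) (ε z))
    (fun z => Metric.isOpen_ball) hcov
  apply hns
  have hle : ∀ n, f n ≤ ∑ z ∈ t, Set.indicator {k | dist (d k) (z:ℂ) < ε z} f n := by
    intro n
    obtain ⟨z, hz, hmem⟩ := Set.mem_iUnion₂.1 (ht (hd n))
    have h1 : f n = Set.indicator {k | dist (d k) (z:ℂ) < ε z} f n := by
      rw [Set.indicator_of_mem]
      exact Metric.mem_ball.1 hmem
    rw [h1]
    exact Finset.single_le_sum
      (f := fun (w : Metric.sphere (0:ℂ) 1) => Set.indicator {k | dist (d k) (w:ℂ) < ε w} f n)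
      (fun i _ => Set.indicator_nonneg (fun j _ => hf j) n) hz
  exact Summable.of_nonneg_of_le hf hle (summable_sum (fun z _ => hsum z))

theorem stmt_4 (c : ℕ → ℂ) (hc : Tendsto c atTop (𝓝 0))
    (hns : ¬ Summable (fun n => ‖c n‖)) :
    ∃ nk : ℕ → ℕ, StrictMono nk ∧
      ¬ Summable (fun k => ‖c (nk k)‖) ∧
      ((∃ t : ℝ, Tendsto (fun k => (c (nk k)).re / (c (nk k)).im) atTop (𝓝 t)) ∨
        Tendsto (fun k => |(c (nk k)).re / (c (nk k)).im|) atTop atTop) := by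
  set f : ℕ → ℝ := fun n => ‖c n‖ with hfdef
  have hf : ∀ n, 0 ≤ f n := fun n => norm_nonneg _
  by_cases hA : Summable (Set.indicator {n | (c n).im = 0} f)
  · -- Case B : the part with im ≠ 0 is not summable
    set f' : ℕ → ℝ := Set.indicator {n | (c n).im ≠ 0} f with hf'def
    have hf'nn : ∀ n, 0 ≤ f' n := fun n => Set.indicator_nonneg (fun j _ => hf j) n
    have hf'ns : ¬ Summable f' := by
      intro h
      apply hns
      have heq : f = fun n => Set.indicator {n | (c n).im = 0} f n + f' n := by
        funext n
        by_cases hh : (c n).im = 0 <;>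
          simp [hf'def, Set.indicator_apply, hh]
      have := hA.add h
      rw [← heq] at this
      exact this
    set d : ℕ → ℂ := fun n => if c n = 0 then 1 else c n / ((‖c n‖ : ℝ) : ℂ) with hddef
    have hdsph : ∀ n, d n ∈ Metric.sphere (0:ℂ) 1 := by
      intro n
      simp only [Metric.mem_sphere, dist_zero_right, hddef]
      split_ifs with h
      · simp
      · rw [norm_div, Complex.norm_real, Real.norm_eq_abs,
          _root_.abs_of_nonneg (norm_nonneg _),
          div_self (by simpa using h)]
    obtain ⟨z, hz, hheavy⟩ := aux_heavy f' hf'nn d hdsph hf'ns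
    set S : ℕ → Set ℕ := fun m => {n | (c n).im ≠ 0 ∧ dist (d n) z < 1/((m:ℝ)+1)} with hSdef
    have hSsub : ∀ m, S (m+1) ⊆ S m := by
      intro m n hn
      refine ⟨hn.1, lt_of_lt_of_le hn.2 ?_⟩
      apply one_div_le_one_div_of_le
      · positivity
      · push_cast; linarith
    have hSind : ∀ m, ¬ Summable ((S m).indicator f') := by
      intro m hsum
      apply hheavy (1/((m:ℝ)+1)) (by positivity)
      have heq : Set.indicator {n | dist (d n) z < 1/((m:ℝ)+1)} f' = (S m).indicator f' := by
        funext n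
        by_cases hh : (c n).im = 0
        · have h0 : f' n = 0 := Set.indicator_of_notMem (by simp [hh]) f
          simp [Set.indicator_apply, h0]
        · simp [Set.indicator_apply, hSdef, hh]
      rw [heq]
      exact hsum
    obtain ⟨nk, hsm, hsum, hS0, hev⟩ := aux_subseq f' hf'nn S hSsub hSind
    have him0 : ∀ k, (c (nk k)).im ≠ 0 := fun k => (hS0 k).1
    have hcne : ∀ k, c (nk k) ≠ 0 := fun k h => him0 k (by rw [h]; rfl)
    have habs : ∀ k, ‖c (nk k)‖ ≠ 0 :=
      fun k => norm_ne_zero_iff.2 (hcne k)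
    have hsum' : ¬ Summable (fun k => ‖c (nk k)‖) := by
      intro h
      apply hsum
      have heq : (fun k => f' (nk k)) = fun k => ‖c (nk k)‖ := by
        funext k
        exact Set.indicator_of_mem (show nk k ∈ {n | (c n).im ≠ 0} from him0 k) f
      rw [heq]
      exact h
    have hdz : Tendsto (fun k => d (nk k)) atTop (𝓝 z) := by
      rw [Metric.tendsto_atTop]
      intro ε hε
      obtain ⟨m, hm⟩ := exists_nat_one_div_lt hε
      obtain ⟨K, hK⟩ := eventually_atTop.1 (hev m)
      exact ⟨K, fun n hn => lt_trans (hK n hn).2 hm⟩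
    have hre : Tendsto (fun k => (d (nk k)).re) atTop (𝓝 z.re) :=
      (Complex.continuous_re.tendsto z).comp hdz
    have him : Tendsto (fun k => (d (nk k)).im) atTop (𝓝 z.im) :=
      (Complex.continuous_im.tendsto z).comp hdz
    have hdval : ∀ k, (d (nk k)).re = (c (nk k)).re / ‖c (nk k)‖ ∧
        (d (nk k)).im = (c (nk k)).im / ‖c (nk k)‖ := by
      intro k
      have hd : d (nk k) = c (nk k) / ((‖c (nk k)‖ : ℝ) : ℂ) := if_neg (hcne k)
      rw [hd, Complex.div_ofReal_re, Complex.div_ofReal_im]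
      exact ⟨rfl, rfl⟩
    have hratio : ∀ k, (c (nk k)).re / (c (nk k)).im = (d (nk k)).re / (d (nk k)).im := by
      intro k
      rw [(hdval k).1, (hdval k).2, div_div_div_comm, div_self (habs k), div_one]
    refine ⟨nk, hsm, hsum', ?_⟩
    rcases eq_or_ne z.im 0 with hzim | hzim
    · -- ratios blow up
      right
      have hzabs : ‖z‖ = 1 := by
        simpa using (Metric.mem_sphere.1 hz)
      have hzre : |z.re| = 1 := by
        rw [Complex.abs_re_eq_norm.2 hzim, hzabs]
      have h1 : Tendsto (fun k => |(d (nk k)).re|) atTop (𝓝 1) := by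
        have := hre.abs
        rwa [hzre] at this
      have hdim0 : ∀ k, (d (nk k)).im ≠ 0 := by
        intro k
        rw [(hdval k).2]
        exact div_ne_zero (him0 k) (habs k)
      have h2 : Tendsto (fun k => |(d (nk k)).im|) atTop (𝓝[>] 0) := by
        rw [tendsto_nhdsWithin_iff]
        constructor
        · have := him.abs
          rwa [hzim, abs_zero] at this
        · exact Eventually.of_forall (fun k => abs_pos.2 (hdim0 k))
      have h3 : Tendsto (fun k => |(d (nk k)).im|⁻¹) atTop atTop :=
        tendsto_inv_nhdsGT_zero.comp h2
      have h4 : Tendsto (fun k => |(d (nk k)).re| * |(d (nk k)).im|⁻¹) atTop atTop :=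
        Tendsto.pos_mul_atTop one_pos h1 h3
      apply h4.congr
      intro k
      rw [hratio k, abs_div, div_eq_mul_inv]
    · -- ratios converge to z.re / z.im
      left
      refine ⟨z.re / z.im, ?_⟩
      exact (hre.div him hzim).congr (fun k => (hratio k).symm)
  · -- Case A : sum over {im = 0} diverges; ratios are all 0 there
    obtain ⟨nk, hsm, hsum, hS0, _⟩ := aux_subseq f hf (fun _ => {n | (c n).im = 0})
      (fun m => subset_rfl) (fun m => hA)
    refine ⟨nk, hsm, hsum, Or.inl ⟨0, ?_⟩⟩
    have heq : (fun k => (c (nk k)).re / (c (nk k)).im) = fun _ => (0:ℝ) := by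
      funext k
      have : (c (nk k)).im = 0 := hS0 k
      rw [this, div_zero]
    rw [heq]
    exact tendsto_const_nhds
end

section
/- Let (cₙ = aₙ + ibₙ) be a linearly non-summable sequence of complex numbers with cₙ → 0. Suppose there exists a subsequence (c_{n_k}) with ∑_k |c_{n_k}| = ∞ but ∑_k |a_{n_k}| < ∞ (or ∑_k |b_{n_k}| < ∞). Then R({cₙ}) is dense in ℂ. -/
open Complex Filter Topology

def rangeSet (c : ℕ → ℂ) : Set ℂ :=
  {z | ∃ x : ℕ → ℝ, (∀ n, x n = 1 ∨ x n = -1) ∧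
    Tendsto (fun N => ∑ n ∈ Finset.range N, (x n : ℂ) * c n) atTop (𝓝 z)}

lemma sg_finsupp (f : ℕ → ℂ) (N0 : ℕ) (h : ∀ n, N0 ≤ n → f n = 0) :
    Tendsto (fun N => ∑ n ∈ Finset.range N, f n) atTop
      (𝓝 (∑ n ∈ Finset.range N0, f n)) := by
  apply Tendsto.congr' _ tendsto_const_nhds
  filter_upwards [eventually_ge_atTop N0] with N hN
  exact Finset.sum_subset (Finset.range_subset_range.mpr hN)
    (fun n _ hn => h n (by simpa using hn))

lemma sg_sub (e : ℕ → ℕ) (he : StrictMono e) (F : ℕ → ℂ)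
    (hF : ∀ n, n ∉ Set.range e → F n = 0) (L : ℂ)
    (hL : Tendsto (fun m => ∑ k ∈ Finset.range m, F (e k)) atTop (𝓝 L)) :
    Tendsto (fun N => ∑ n ∈ Finset.range N, F n) atTop (𝓝 L) := by
  classical
  set cnt : ℕ → ℕ := fun N => ((Finset.range N).filter (fun j => e j < N)).card with hcnt
  have hset : ∀ k, ∀ N, e k < N → ((Finset.range N).filter (fun j => e j < N)).card = k →
      False → True := fun _ _ _ _ _ => trivial
  -- key: the filter set for N = e k (+1 variants)
  have hfil : ∀ (N : ℕ), ∀ k, e k = N →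
      (Finset.range (N+1)).filter (fun j => e j < N+1) = Finset.range (k+1) ∧
      (Finset.range N).filter (fun j => e j < N) = Finset.range k := by
    intro N k hk
    constructor
    · ext j
      simp only [Finset.mem_filter, Finset.mem_range]
      constructor
      · rintro ⟨-, hj⟩
        have : e j ≤ e k := by omega
        exact Nat.lt_succ_of_le (he.le_iff_le.mp this)
      · intro hj
        have hj' : j ≤ k := Nat.lt_succ_iff.mp hj
        have : e j ≤ e k := he.le_iff_le.mpr hj'
        have hje : j ≤ e j := he.le_apply
        exact ⟨by omega, by omega⟩
    · ext j
      simp only [Finset.mem_filter, Finset.mem_range]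
      constructor
      · rintro ⟨-, hj⟩
        exact he.lt_iff_lt.mp (by omega)
      · intro hj
        have : e j < e k := he.lt_iff_lt.mpr hj
        have hje : j ≤ e j := he.le_apply
        exact ⟨by omega, by omega⟩
  have hid : ∀ N, ∑ n ∈ Finset.range N, F n = ∑ k ∈ Finset.range (cnt N), F (e k) := by
    intro N
    induction N with
    | zero => simp [hcnt]
    | succ N ih =>
      rw [Finset.sum_range_succ, ih]
      by_cases hN : N ∈ Set.range e
      · obtain ⟨k, hk⟩ := hN
        obtain ⟨h1, h2⟩ := hfil N k hk
        have hc1 : cnt (N+1) = k + 1 := by rw [hcnt]; simp only; rw [h1, Finset.card_range]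
        have hc2 : cnt N = k := by rw [hcnt]; simp only; rw [h2, Finset.card_range]
        rw [hc1, hc2, Finset.sum_range_succ, hk]
      · have hc : cnt (N+1) = cnt N := by
          rw [hcnt]; simp only
          congr 1
          ext j
          simp only [Finset.mem_filter, Finset.mem_range]
          constructor
          · rintro ⟨-, hj⟩
            have : e j ≠ N := fun h => hN ⟨j, h⟩
            have hje : j ≤ e j := he.le_apply
            exact ⟨by omega, by omega⟩
          · rintro ⟨h1, h2⟩
            exact ⟨by omega, by omega⟩
        rw [hc, hF N hN, add_zero]
  have hmono : Monotone cnt := by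
    intro N M hNM
    apply Finset.card_le_card
    intro j
    simp only [Finset.mem_filter, Finset.mem_range]
    rintro ⟨h1, h2⟩
    exact ⟨by omega, by omega⟩
  have htop : Tendsto cnt atTop atTop := by
    apply tendsto_atTop_atTop_of_monotone hmono
    intro b
    refine ⟨e b + 1, ?_⟩
    have := (hfil (e b) b rfl).1
    have hc : cnt (e b + 1) = b + 1 := by rw [hcnt]; simp only; rw [this, Finset.card_range]
    omega
  have := hL.comp htop
  exact Tendsto.congr (fun N => (hid N).symm) this

section Steer

variable (t : ℕ → ℝ) (τ : ℝ)

private noncomputable def sgS : ℕ → ℝ := fun n =>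
  Nat.rec (0:ℝ) (fun k sk => sk + (if sk ≤ τ then |t k| else -|t k|)) n

private noncomputable def sgX : ℕ → ℝ := fun k =>
  if sgS t τ k ≤ τ then (if 0 ≤ t k then 1 else -1) else (if 0 ≤ t k then -1 else 1)

private lemma sgS_succ (k : ℕ) :
    sgS t τ (k+1) = sgS t τ k + (if sgS t τ k ≤ τ then |t k| else -|t k|) := rfl

private lemma sgX_signs (k : ℕ) : sgX t τ k = 1 ∨ sgX t τ k = -1 := by
  unfold sgX
  by_cases h1 : sgS t τ k ≤ τ <;> by_cases h2 : 0 ≤ t k <;> simp [h1, h2]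

private lemma sgX_mul (k : ℕ) :
    sgX t τ k * t k = if sgS t τ k ≤ τ then |t k| else -|t k| := by
  unfold sgX
  by_cases h1 : sgS t τ k ≤ τ <;> by_cases h2 : 0 ≤ t k <;>
    simp only [h1, h2, if_true, if_false, ite_true, ite_false]
  · rw [_root_.abs_of_nonneg h2]; ring
  · rw [_root_.abs_of_neg (not_le.mp h2)]; ring
  · rw [_root_.abs_of_nonneg h2]; ring
  · rw [_root_.abs_of_neg (not_le.mp h2)]; ring

private lemma sgS_partial (K : ℕ) :
    ∑ k ∈ Finset.range K, sgX t τ k * t k = sgS t τ K := by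
  induction K with
  | zero => simp [sgS]
  | succ K ih => rw [Finset.sum_range_succ, ih, sgX_mul, ← sgS_succ]

private lemma sgS_dist (k : ℕ) :
    |sgS t τ (k+1) - τ| = _root_.abs (|sgS t τ k - τ| - |t k|) := by
  rcases le_or_gt (sgS t τ k) τ with h | h
  · rw [sgS_succ, if_pos h]
    have h1 : |sgS t τ k - τ| = τ - sgS t τ k := by
      rw [_root_.abs_of_nonpos (by linarith)]; ring
    rw [h1, show sgS t τ k + |t k| - τ = |t k| - (τ - sgS t τ k) by ring, abs_sub_comm]
  · rw [sgS_succ, if_neg (not_le.mpr h)]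
    have h1 : |sgS t τ k - τ| = sgS t τ k - τ := _root_.abs_of_pos (by linarith)
    rw [h1]; congr 1; ring

private lemma sgS_step (k : ℕ) :
    |sgS t τ (k+1) - τ| ≤ max (|sgS t τ k - τ| - |t k|) |t k| := by
  rw [sgS_dist]
  rcases le_or_gt (|t k|) (|sgS t τ k - τ|) with h | h
  · rw [_root_.abs_of_nonneg (by linarith)]; exact le_max_left _ _
  · rw [_root_.abs_of_neg (by linarith)]
    refine le_trans ?_ (le_max_right _ _)
    have := abs_nonneg (sgS t τ k - τ)
    linarith

end Steer

lemma sg_steer_inf (t : ℕ → ℝ) (ht0 : Tendsto t atTop (𝓝 0))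
    (hns : ¬ Summable (fun k => |t k|)) (τ : ℝ) :
    ∃ x : ℕ → ℝ, (∀ k, x k = 1 ∨ x k = -1) ∧
      Tendsto (fun K => ∑ k ∈ Finset.range K, x k * t k) atTop (𝓝 τ) := by
  refine ⟨sgX t τ, sgX_signs t τ, ?_⟩
  have hreach : ∀ N1, ∃ k, N1 ≤ k ∧ |sgS t τ k - τ| ≤ |t k| := by
    intro N1
    by_contra hcon
    push_neg at hcon
    have hdec : ∀ k, N1 ≤ k → |sgS t τ (k+1) - τ| = |sgS t τ k - τ| - |t k| := by
      intro k hk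
      rw [sgS_dist, _root_.abs_of_nonneg (by linarith [hcon k hk])]
    have hsum : ∀ k, |sgS t τ (N1 + k) - τ|
        = |sgS t τ N1 - τ| - ∑ i ∈ Finset.range k, |t (N1 + i)| := by
      intro k
      induction k with
      | zero => simp
      | succ k ih =>
        rw [Finset.sum_range_succ, show N1 + (k+1) = (N1+k)+1 from rfl,
          hdec _ (by omega), ih]
        ring
    have hbdd : ∀ k, ∑ i ∈ Finset.range k, |t (N1 + i)| ≤ |sgS t τ N1 - τ| := by
      intro k
      have h0 := abs_nonneg (sgS t τ (N1 + k) - τ)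
      rw [hsum k] at h0
      linarith
    have hns2 : ¬ Summable (fun i => |t (N1 + i)|) := by
      intro hS
      apply hns
      have : Summable (fun i => |t (i + N1)|) := by
        apply hS.congr
        intro i; rw [Nat.add_comm]
      exact (summable_nat_add_iff N1).mp this
    have htop2 : Tendsto (fun k => ∑ i ∈ Finset.range k, |t (N1 + i)|) atTop atTop :=
      (not_summable_iff_tendsto_nat_atTop_of_nonneg (fun i => abs_nonneg _)).mp hns2
    obtain ⟨k, hk⟩ := (htop2.eventually_ge_atTop (|sgS t τ N1 - τ| + 1)).exists
    linarith [hbdd k]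
  have hconv : Tendsto (sgS t τ) atTop (𝓝 τ) := by
    rw [Metric.tendsto_atTop]
    intro ε hε
    obtain ⟨N1, hN1⟩ := (Metric.tendsto_atTop.mp ht0) (ε/2) (by linarith)
    have ht_small : ∀ k, N1 ≤ k → |t k| ≤ ε/2 := by
      intro k hk
      have := hN1 k hk
      rw [Real.dist_eq, sub_zero] at this
      linarith
    obtain ⟨k0, hk0N, hk0⟩ := hreach N1
    have hstay : ∀ k, k0 ≤ k → |sgS t τ k - τ| ≤ ε/2 := by
      intro k hk
      induction k, hk using Nat.le_induction with
      | base => exact le_trans hk0 (ht_small k0 hk0N)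
      | succ k hk ih =>
        refine le_trans (sgS_step t τ k) (max_le (by linarith [abs_nonneg (t k)]) ?_)
        exact ht_small k (by omega)
    refine ⟨k0, fun n hn => ?_⟩
    rw [Real.dist_eq]
    linarith [hstay n hn]
  exact hconv.congr (fun K => (sgS_partial t τ K).symm)

lemma sg_steer_fin (t : ℕ → ℝ) (m : ℕ) (ε : ℝ) (hε : 0 < ε) (hb : ∀ i, i < m → |t i| ≤ ε)
    (u0 : ℝ) (hcap : |u0| ≤ ∑ i ∈ Finset.range m, |t i|) :
    ∃ x : ℕ → ℝ, (∀ k, x k = 1 ∨ x k = -1) ∧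
      |(∑ i ∈ Finset.range m, x i * t i) - u0| ≤ ε := by
  refine ⟨sgX t u0, sgX_signs t u0, ?_⟩
  rw [sgS_partial]
  have hkey : ∀ p, p ≤ m →
      |sgS t u0 p - u0| ≤ max (|u0| - ∑ i ∈ Finset.range p, |t i|) ε := by
    intro p hp
    induction p with
    | zero =>
      have h0 : sgS t u0 0 = 0 := rfl
      rw [h0, Finset.sum_range_zero, show (0:ℝ) - u0 = -u0 by ring, abs_neg, sub_zero]
      exact le_max_left _ _
    | succ p ih =>
      have ihh := ih (by omega)
      refine le_trans (sgS_step t u0 p) (max_le ?_ ?_)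
      · rw [Finset.sum_range_succ]
        rcases max_cases (|u0| - ∑ i ∈ Finset.range p, |t i|) ε with ⟨hm, _⟩ | ⟨hm, _⟩
        · rw [hm] at ihh
          refine le_trans (by linarith) (le_max_left _ _)
        · rw [hm] at ihh
          refine le_trans (by linarith [abs_nonneg (t p)]) (le_max_right _ _)
      · exact le_trans (hb p (by omega)) (le_max_right _ _)
  have := hkey m le_rfl
  refine le_trans this (max_le (by linarith) le_rfl)

lemma sg_dep (p q r : ℂ) : ∃ l1 l2 l3 : ℝ, ¬(l1 = 0 ∧ l2 = 0 ∧ l3 = 0) ∧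
    (l1:ℂ) * p + (l2:ℂ) * q + (l3:ℂ) * r = 0 := by
  by_cases hp : p = 0
  · exact ⟨1, 0, 0, by simp, by simp [hp]⟩
  by_cases hpq : p.re * q.im - p.im * q.re = 0
  · -- q parallel to p : q = mu p
    have hd : p.re^2 + p.im^2 ≠ 0 := by
      intro h
      apply hp
      have h1 : p.re = 0 := by nlinarith [sq_nonneg p.re, sq_nonneg p.im]
      have h2 : p.im = 0 := by nlinarith [sq_nonneg p.re, sq_nonneg p.im]
      exact Complex.ext h1 h2
    refine ⟨p.re*q.re + p.im*q.im, -(p.re^2 + p.im^2), 0, ?_, ?_⟩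
    · intro ⟨_, h2, _⟩
      exact hd (by linarith)
    · apply Complex.ext
      · simp only [Complex.add_re, Complex.add_im, Complex.mul_re, Complex.mul_im,
          Complex.ofReal_re, Complex.ofReal_im, Complex.zero_re, Complex.zero_im]
        linear_combination (p.im : ℝ) * hpq
      · simp only [Complex.add_re, Complex.add_im, Complex.mul_re, Complex.mul_im,
          Complex.ofReal_re, Complex.ofReal_im, Complex.zero_re, Complex.zero_im]
        linear_combination (-p.re : ℝ) * hpq
  · refine ⟨q.re * r.im - q.im * r.re, r.re * p.im - r.im * p.re,
      p.re * q.im - p.im * q.re, by tauto, ?_⟩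
    apply Complex.ext <;>
      simp [Complex.add_re, Complex.add_im, Complex.mul_re, Complex.mul_im,
        Complex.ofReal_re, Complex.ofReal_im] <;> ring

noncomputable def sgStop (l a : ℝ) : ℝ := if 0 < l then (1 - a)/l else (-1 - a)/l

lemma sgStop_pos (l a : ℝ) (hl : l ≠ 0) (ha : |a| < 1) : 0 < sgStop l a := by
  obtain ⟨ha1, ha2⟩ := abs_lt.mp ha
  unfold sgStop
  rcases lt_or_gt_of_ne hl with h | h
  · rw [if_neg (by linarith)]
    exact div_pos_iff.mpr (Or.inr ⟨by linarith, h⟩)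
  · rw [if_pos h]
    exact div_pos (by linarith) h

lemma sgStop_mem (l a t : ℝ) (ha : |a| ≤ 1) (ht0 : 0 ≤ t) (ht : t ≤ sgStop l a) :
    |a + t * l| ≤ 1 := by
  obtain ⟨ha1, ha2⟩ := abs_le.mp ha
  by_cases hl : l = 0
  · simpa [hl] using ha
  rw [abs_le]
  unfold sgStop at ht
  rcases lt_or_gt_of_ne hl with h | h
  · rw [if_neg (by linarith)] at ht
    have h1 : t * l ≥ ((-1 - a)/l) * l := by
      apply mul_le_mul_of_nonpos_right ht (by linarith)
    rw [div_mul_cancel₀ _ (by linarith : l ≠ 0)] at h1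
    have h2 : t * l ≤ 0 := mul_nonpos_of_nonneg_of_nonpos ht0 (by linarith)
    constructor <;> linarith
  · rw [if_pos h] at ht
    have h1 : t * l ≤ ((1 - a)/l) * l := by
      apply mul_le_mul_of_nonneg_right ht (by linarith)
    rw [div_mul_cancel₀ _ (by linarith : l ≠ 0)] at h1
    have h2 : 0 ≤ t * l := mul_nonneg ht0 (by linarith)
    constructor <;> linarith

lemma sgStop_hit (l a : ℝ) (hl : l ≠ 0) : |a + sgStop l a * l| = 1 := by
  unfold sgStop
  rcases lt_or_gt_of_ne hl with h | h
  · rw [if_neg (by linarith), div_mul_cancel₀ _ (by linarith : l ≠ 0)]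
    norm_num
  · rw [if_pos h, div_mul_cancel₀ _ (by linarith : l ≠ 0)]
    norm_num

def sgInv (w : ℕ → ℂ) (p : ℕ) (α : ℕ → ℝ) : Prop :=
  (∀ i, |α i| ≤ 1) ∧ (∀ i, p ≤ i → α i = 0) ∧
  (∑ i ∈ Finset.range p, (α i : ℂ) * w i = 0) ∧
  (∃ i1 i2, ∀ i, i < p → ¬ |α i| = 1 → i = i1 ∨ i = i2)

lemma sgInv_zero (w : ℕ → ℂ) : sgInv w 0 (fun _ => 0) :=
  ⟨by intro i; norm_num, fun _ _ => rfl, by simp, 0, 0, by omega⟩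

lemma sg_BG_step (w : ℕ → ℂ) (p : ℕ) (α : ℕ → ℝ) (h : sgInv w p α) :
    ∃ β, sgInv w (p+1) β ∧ ∀ i, |α i| = 1 → β i = α i := by
  classical
  obtain ⟨hb, hsup, hz, i1, i2, hcard⟩ := h
  have hαp : α p = 0 := hsup p le_rfl
  have hsum1 : ∑ i ∈ Finset.range (p+1), (α i : ℂ) * w i = 0 := by
    rw [Finset.sum_range_succ, hz, hαp]; simp
  by_cases hfull : i1 < p ∧ i2 < p ∧ ¬ |α i1| = 1 ∧ ¬ |α i2| = 1 ∧ i1 ≠ i2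
  case neg =>
    refine ⟨α, ⟨hb, fun i hi => hsup i (by omega), hsum1, ?_⟩, fun i _ => rfl⟩
    by_cases h1 : i1 < p ∧ ¬ |α i1| = 1
    · refine ⟨i1, p, ?_⟩
      intro i hip hi
      rcases Nat.lt_succ_iff_lt_or_eq.mp hip with hlt | heq
      · rcases hcard i hlt hi with rfl | rfl
        · exact Or.inl rfl
        · -- i = i2 ; show i2 = i1
          left
          by_contra hne
          exact hfull ⟨h1.1, hlt, h1.2, hi, fun he => hne he.symm⟩
      · exact Or.inr heq
    · refine ⟨i2, p, ?_⟩
      intro i hip hi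
      rcases Nat.lt_succ_iff_lt_or_eq.mp hip with hlt | heq
      · rcases hcard i hlt hi with rfl | rfl
        · exact absurd ⟨hlt, hi⟩ h1
        · exact Or.inl rfl
      · exact Or.inr heq
  case pos =>
    obtain ⟨hi1p, hi2p, hu1, hu2, h12⟩ := hfull
    have hne1p : i1 ≠ p := by omega
    have hne2p : i2 ≠ p := by omega
    obtain ⟨l1, l2, l3, hlnz, hdep⟩ := sg_dep (w i1) (w i2) (w p)
    set L : Fin 3 → ℝ := ![l1, l2, l3] with hL
    set Av : Fin 3 → ℝ := ![α i1, α i2, 0] with hAv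
    have hAb : ∀ k, |Av k| ≤ 1 := by
      intro k
      fin_cases k <;> simp [hAv] <;> first | exact hb i1 | exact hb i2
    have hAlt : ∀ k, L k ≠ 0 → |Av k| < 1 := by
      intro k hk
      fin_cases k <;> simp [hAv] <;>
        first
        | exact lt_of_le_of_ne (hb i1) (by simpa using hu1)
        | exact lt_of_le_of_ne (hb i2) (by simpa using hu2)
        | norm_num
    set F : Finset (Fin 3) := Finset.univ.filter (fun k => L k ≠ 0) with hF
    have hFne : F.Nonempty := by
      by_contra hcon
      apply hlnz
      rw [Finset.not_nonempty_iff_eq_empty] at hcon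
      have hall : ∀ k : Fin 3, L k = 0 := by
        intro k
        by_contra hk
        have : k ∈ F := by rw [hF]; simp [hk]
        rw [hcon] at this
        exact absurd this (Finset.notMem_empty k)
      refine ⟨?_, ?_, ?_⟩
      · simpa [hL] using hall 0
      · simpa [hL] using hall 1
      · simpa [hL] using hall 2
    set tstar : ℝ := F.inf' hFne (fun k => sgStop (L k) (Av k)) with htstar
    have htpos : 0 < tstar := by
      rw [htstar, Finset.lt_inf'_iff]
      intro k hk
      have hkne : L k ≠ 0 := by
        rw [hF] at hk; simpa using hk
      exact sgStop_pos _ _ hkne (hAlt k hkne)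
    have hmem : ∀ k, |Av k + tstar * L k| ≤ 1 := by
      intro k
      by_cases hk : L k = 0
      · simpa [hk] using hAb k
      · have hkF : k ∈ F := by rw [hF]; simp [hk]
        exact sgStop_mem _ _ _ (hAb k) (le_of_lt htpos) (Finset.inf'_le _ hkF)
    obtain ⟨k0, hk0F, hk0⟩ := Finset.exists_mem_eq_inf' hFne (fun k => sgStop (L k) (Av k))
    have hk0ne : L k0 ≠ 0 := by rw [hF] at hk0F; simpa using hk0F
    have hhit : |Av k0 + tstar * L k0| = 1 := by
      rw [htstar, hk0]
      rw [show sgStop (L k0) (Av k0) * L k0 = Av k0 + sgStop (L k0) (Av k0) * L k0 - Av k0 by ring]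
      have := sgStop_hit (L k0) (Av k0) hk0ne
      rw [show Av k0 + (Av k0 + sgStop (L k0) (Av k0) * L k0 - Av k0) = Av k0 + sgStop (L k0) (Av k0) * L k0 by ring]
      exact this
    set Λ : ℕ → ℝ := fun i => if i = i1 then l1 else if i = i2 then l2 else if i = p then l3 else 0 with hΛ
    set β : ℕ → ℝ := fun i => α i + tstar * Λ i with hβ
    have hβ1 : β i1 = Av 0 + tstar * L 0 := by
      rw [hβ, hΛ]; simp [hAv, hL]
    have hβ2 : β i2 = Av 1 + tstar * L 1 := by
      rw [hβ, hΛ]; simp [Ne.symm h12, h12, hAv, hL]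
    have hβ3 : β p = Av 2 + tstar * L 2 := by
      rw [hβ, hΛ]; simp [Ne.symm hne1p, Ne.symm hne2p, hne1p, hne2p, hαp, hAv, hL]
    have hβother : ∀ i, i ≠ i1 → i ≠ i2 → i ≠ p → β i = α i := by
      intro i h1 h2 h3
      rw [hβ, hΛ]; simp [h1, h2, h3]
    refine ⟨β, ⟨?_, ?_, ?_, ?_⟩, ?_⟩
    · intro i
      by_cases e1 : i = i1
      · rw [e1, hβ1]; exact hmem 0
      by_cases e2 : i = i2
      · rw [e2, hβ2]; exact hmem 1
      by_cases e3 : i = p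
      · rw [e3, hβ3]; exact hmem 2
      · rw [hβother i e1 e2 e3]; exact hb i
    · intro i hi
      rw [hβother i (by omega) (by omega) (by omega)]
      exact hsup i (by omega)
    · have hsplit : ∑ i ∈ Finset.range (p+1), (β i : ℂ) * w i
          = ∑ i ∈ Finset.range (p+1), (α i : ℂ) * w i
            + (tstar : ℂ) * ∑ i ∈ Finset.range (p+1), (Λ i : ℂ) * w i := by
        rw [Finset.mul_sum, ← Finset.sum_add_distrib]
        apply Finset.sum_congr rfl
        intro i _
        rw [hβ]
        push_cast
        ring
      have hΛsum : ∑ i ∈ Finset.range (p+1), (Λ i : ℂ) * w i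
          = (l1:ℂ) * w i1 + (l2:ℂ) * w i2 + (l3:ℂ) * w p := by
        have hsub : ({i1, i2, p} : Finset ℕ) ⊆ Finset.range (p+1) := by
          intro i hi
          simp only [Finset.mem_insert, Finset.mem_singleton] at hi
          rcases hi with rfl | rfl | rfl <;> simp [Finset.mem_range] <;> omega
        rw [← Finset.sum_subset hsub]
        · rw [Finset.sum_insert (by simp [h12, hne1p]),
            Finset.sum_insert (by simp [hne2p]), Finset.sum_singleton]
          have e1 : Λ i1 = l1 := by rw [hΛ]; simp
          have e2 : Λ i2 = l2 := by rw [hΛ]; simp [Ne.symm h12]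
          have e3 : Λ p = l3 := by rw [hΛ]; simp [Ne.symm hne1p, Ne.symm hne2p]
          rw [e1, e2, e3]; ring
        · intro i _ hni
          simp only [Finset.mem_insert, Finset.mem_singleton] at hni
          push_neg at hni
          have : Λ i = 0 := by rw [hΛ]; simp [hni.1, hni.2.1, hni.2.2]
          rw [this]
          simp
      rw [hsplit, hsum1, hΛsum, hdep]
      simp
    · -- witnesses
      have hk0cases : k0 = 0 ∨ k0 = 1 ∨ k0 = 2 := by omega
      have hwit : ∀ i, i < p+1 → ¬ |β i| = 1 → i = i1 ∨ i = i2 ∨ i = p := by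
        intro i hip hi
        by_cases e1 : i = i1
        · exact Or.inl e1
        by_cases e2 : i = i2
        · exact Or.inr (Or.inl e2)
        by_cases e3 : i = p
        · exact Or.inr (Or.inr e3)
        · exfalso
          rw [hβother i e1 e2 e3] at hi
          rcases hcard i (by omega) hi with h | h
          · exact e1 h
          · exact e2 h
      rcases hk0cases with hk | hk | hk
      · refine ⟨i2, p, ?_⟩
        intro i hip hi
        rcases hwit i hip hi with rfl | h | h
        · exfalso
          apply hi
          rw [hβ1]
          simpa [hk] using hhit
        · exact Or.inl h
        · exact Or.inr h
      · refine ⟨i1, p, ?_⟩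
        intro i hip hi
        rcases hwit i hip hi with h | rfl | h
        · exact Or.inl h
        · exfalso
          apply hi
          rw [hβ2]
          simpa [hk] using hhit
        · exact Or.inr h
      · refine ⟨i1, i2, ?_⟩
        intro i hip hi
        rcases hwit i hip hi with h | h | rfl
        · exact Or.inl h
        · exact Or.inr h
        · exfalso
          apply hi
          rw [hβ3]
          simpa [hk] using hhit
    · intro i hi
      apply hβother
      · intro e; rw [e] at hi; exact hu1 hi
      · intro e; rw [e] at hi; exact hu2 hi
      · intro e; rw [e, hαp] at hi; norm_num at hi

lemma sg_BG (w : ℕ → ℂ) (m : ℕ) (δ : ℝ) (hδ : 0 ≤ δ) (hw : ∀ i, i < m → ‖w i‖ ≤ δ) :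
    ∃ x : ℕ → ℝ, (∀ i, x i = 1 ∨ x i = -1) ∧
      ∀ p, p ≤ m → ‖∑ i ∈ Finset.range p, (x i : ℂ) * w i‖ ≤ 4 * δ := by
  classical
  choose f hf1 hf2 using sg_BG_step w
  let A : (p : ℕ) → {α : ℕ → ℝ // sgInv w p α} :=
    fun p => Nat.rec ⟨fun _ => 0, sgInv_zero w⟩
      (fun q prev => ⟨f q prev.1 prev.2, hf1 q prev.1 prev.2⟩) p
  have hA : ∀ p, (A (p+1)).1 = f p (A p).1 (A p).2 := fun p => rfl
  have hlink : ∀ p i, |(A p).1 i| = 1 → (A (p+1)).1 i = (A p).1 i := by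
    intro p i h
    rw [hA]
    exact hf2 p (A p).1 (A p).2 i h
  have hfix : ∀ p q, p ≤ q → ∀ i, |(A p).1 i| = 1 → (A q).1 i = (A p).1 i := by
    intro p q hpq
    induction q, hpq using Nat.le_induction with
    | base => intro i _; rfl
    | succ q hq ih =>
      intro i h
      have h2 := ih i h
      rw [hlink q i (by rw [h2]; exact h), h2]
  set x : ℕ → ℝ := fun i => if |(A m).1 i| = 1 then (A m).1 i else 1 with hx
  have hxs : ∀ i, x i = 1 ∨ x i = -1 := by
    intro i
    rw [hx]
    simp only
    by_cases h : |(A m).1 i| = 1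
    · rw [if_pos h]
      rcases (abs_eq (by norm_num : (0:ℝ) ≤ 1)).mp h with h | h
      · exact Or.inl h
      · exact Or.inr h
    · rw [if_neg h]; exact Or.inl rfl
  have hxabs : ∀ i, |x i| ≤ 1 := by
    intro i
    rcases hxs i with h | h <;> rw [h] <;> norm_num
  refine ⟨x, hxs, ?_⟩
  intro p hpm
  obtain ⟨hb, hsup, hz, i1, i2, hcard⟩ := (A p).2
  have key : ∑ i ∈ Finset.range p, (x i : ℂ) * w i
      = ∑ i ∈ (Finset.range p) ∩ {i1, i2}, ((x i : ℂ) - ((A p).1 i : ℂ)) * w i := by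
    have h1 : ∑ i ∈ Finset.range p, (x i:ℂ) * w i
        = ∑ i ∈ Finset.range p, ((x i : ℂ) - ((A p).1 i : ℂ)) * w i := by
      simp only [sub_mul]
      rw [Finset.sum_sub_distrib, hz, sub_zero]
    rw [h1]
    apply (Finset.sum_subset Finset.inter_subset_left ?_).symm
    intro i hi hni
    have hip : i < p := Finset.mem_range.mp hi
    have hnotin : i ∉ ({i1, i2} : Finset ℕ) := fun hmem => hni (Finset.mem_inter.mpr ⟨hi, hmem⟩)
    simp only [Finset.mem_insert, Finset.mem_singleton] at hnotin
    push_neg at hnotin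
    have hfixi : |(A p).1 i| = 1 := by
      by_contra hcon
      rcases hcard i hip hcon with h | h
      · exact hnotin.1 h
      · exact hnotin.2 h
    have hxi : x i = (A p).1 i := by
      rw [hx]
      simp only
      rw [hfix p m hpm i hfixi, if_pos hfixi]
    rw [hxi, sub_self, zero_mul]
  rw [key]
  refine le_trans (norm_sum_le _ _) ?_
  have hbound : ∀ i ∈ (Finset.range p) ∩ ({i1, i2} : Finset ℕ),
      ‖((x i : ℂ) - ((A p).1 i : ℂ)) * w i‖ ≤ 2 * δ := by
    intro i hi
    have hip : i < p := Finset.mem_range.mp (Finset.mem_of_mem_inter_left hi)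
    rw [norm_mul]
    have h1 : ‖(x i : ℂ) - ((A p).1 i : ℂ)‖ ≤ 2 := by
      rw [show ((x i : ℂ) - ((A p).1 i : ℂ)) = ((x i - (A p).1 i : ℝ) : ℂ) by push_cast; ring,
        Complex.norm_real]
      have := hxabs i
      have := hb i
      have := abs_sub_abs_le_abs_sub (x i) ((A p).1 i)
      calc |x i - (A p).1 i| ≤ |x i| + |(A p).1 i| := abs_sub _ _
        _ ≤ 2 := by linarith
    exact mul_le_mul h1 (hw i (by omega)) (norm_nonneg _) (by norm_num)
  refine le_trans (Finset.sum_le_sum hbound) ?_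
  rw [Finset.sum_const, nsmul_eq_mul]
  have hcard2 : ((Finset.range p) ∩ ({i1, i2} : Finset ℕ)).card ≤ 2 := by
    refine le_trans (Finset.card_le_card Finset.inter_subset_right) ?_
    refine le_trans (Finset.card_insert_le _ _) ?_
    simp
  have : (((Finset.range p) ∩ ({i1, i2} : Finset ℕ)).card : ℝ) ≤ 2 := by
    exact_mod_cast hcard2
  nlinarith

lemma sg_main (c : ℕ → ℂ) (hc : Tendsto c atTop (𝓝 0))
    (hre : ¬ Summable (fun n => |(c n).re|))
    (e : ℕ → ℕ) (he : StrictMono e)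
    (hbe : ¬ Summable (fun k => |(c (e k)).im|))
    (hae : Summable (fun k => |(c (e k)).re|)) :
    Dense (rangeSet c) := by
  rw [Metric.dense_iff]
  intro z r hr
  classical
  set ε : ℝ := r/4 with hεdef
  have hε : 0 < ε := by rw [hεdef]; linarith
  -- tail sums of |re| tend to 0
  have htail : Tendsto (fun K => ∑' k, |(c (e (K + k))).re|) atTop (𝓝 0) := by
    have h1 := hae.hasSum.tendsto_sum_nat
    have h2 : ∀ K : ℕ, ∑' k, |(c (e (K + k))).re|
        = (∑' k, |(c (e k)).re|) - ∑ i ∈ Finset.range K, |(c (e i)).re| := by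
      intro K
      have h3 := hae.sum_add_tsum_nat_add K
      have h4 : ∑' k, |(c (e (K + k))).re| = ∑' k, |(c (e (k + K))).re| :=
        tsum_congr (fun k => by rw [Nat.add_comm])
      rw [h4]
      linarith
    have h5 : Tendsto (fun K => (∑' k, |(c (e k)).re|) - ∑ i ∈ Finset.range K, |(c (e i)).re|)
        atTop (𝓝 ((∑' k, |(c (e k)).re|) - ∑' k, |(c (e k)).re|)) := tendsto_const_nhds.sub h1
    rw [sub_self] at h5
    exact h5.congr (fun K => (h2 K).symm)
  obtain ⟨K, hK⟩ : ∃ K, ∑' k, |(c (e (K + k))).re| < ε := by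
    obtain ⟨K, hK⟩ := (Metric.tendsto_atTop.mp htail) ε hε
    have := hK K le_rfl
    rw [Real.dist_eq, sub_zero] at this
    exact ⟨K, lt_of_le_of_lt (le_abs_self _) this⟩
  have haeK : Summable (fun k => |(c (e (K + k))).re|) := by
    have := (summable_nat_add_iff K).mpr hae
    exact this.congr (fun k => by rw [Nat.add_comm])
  have hbK : ¬ Summable (fun k => |(c (e (K + k))).im|) := by
    intro h
    apply hbe
    apply (summable_nat_add_iff K).mp
    exact h.congr (fun k => by rw [Nat.add_comm])
  have heK : StrictMono (fun k => e (K + k)) := fun a b hab => he (by omega)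
  have htend_e : Tendsto (fun k => e (K + k)) atTop atTop := heK.tendsto_atTop
  have hc_tail : Tendsto (fun k => c (e (K + k))) atTop (𝓝 0) := hc.comp htend_e
  have him_tail : Tendsto (fun k => (c (e (K + k))).im) atTop (𝓝 0) := by
    have := (Complex.continuous_im.tendsto 0).comp hc_tail
    exact this
  set Se : Set ℕ := Set.range e with hSe
  obtain ⟨NE, hNE⟩ : ∃ NE, ∀ n, NE ≤ n → ‖c n‖ ≤ ε := by
    obtain ⟨N, hN⟩ := (Metric.tendsto_atTop.mp hc) ε hε
    refine ⟨N, fun n hn => ?_⟩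
    have := hN n hn
    rw [dist_eq_norm, sub_zero] at this
    linarith
  set e' : ℕ → ℕ := fun k => e (K + k) with he'def
  set Se' : Set ℕ := Set.range e' with hSe'
  have hSe'Se : Se' ⊆ Se := by
    rintro n ⟨k, rfl⟩
    exact ⟨K + k, rfl⟩
  set f1 : ℕ → ℂ := fun n => if n ∈ Se ∧ n ∉ Se' then c n else 0 with hf1
  set f3 : ℕ → ℂ := fun n => if n ∉ Se ∧ ε < ‖c n‖ then c n else 0 with hf3
  have hf1supp : ∀ n, e K ≤ n → f1 n = 0 := by
    intro n hn
    rw [hf1]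
    simp only
    rw [if_neg]
    rintro ⟨⟨k, rfl⟩, hn2⟩
    have hkK : K ≤ k := he.le_iff_le.mp hn
    exact hn2 ⟨k - K, by simp only [he'def]; congr 1; omega⟩
  have hf3supp : ∀ n, NE ≤ n → f3 n = 0 := by
    intro n hn
    rw [hf3]
    simp only
    rw [if_neg]
    rintro ⟨-, h2⟩
    exact absurd (hNE n hn) (not_le.mpr h2)
  set σ1 : ℂ := ∑ n ∈ Finset.range (e K), f1 n with hσ1
  set σ3 : ℂ := ∑ n ∈ Finset.range NE, f3 n with hσ3
  have hT1 : Tendsto (fun N => ∑ n ∈ Finset.range N, f1 n) atTop (𝓝 σ1) :=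
    sg_finsupp f1 (e K) hf1supp
  have hT3 : Tendsto (fun N => ∑ n ∈ Finset.range N, f3 n) atTop (𝓝 σ3) :=
    sg_finsupp f3 NE hf3supp
  -- capacity
  set q : ℕ → ℝ := fun n => if n ∉ Se ∧ ‖c n‖ ≤ ε then |(c n).re| else 0 with hq
  have hqnn : ∀ n, 0 ≤ q n := by
    intro n
    rw [hq]
    dsimp only
    split
    · exact abs_nonneg _
    · exact le_refl 0
  have hqns : ¬ Summable q := by
    intro hqs
    apply hre
    have hs1 : Summable (fun n => if n ∈ Se then |(c n).re| else 0) := by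
      apply (Function.Injective.summable_iff he.injective ?_).mp
      · apply hae.congr
        intro k
        have : e k ∈ Se := ⟨k, rfl⟩
        simp [Function.comp, this]
      · intro n hn
        have : n ∉ Se := hn
        simp [this]
    have hs2 : Summable (fun n => if n ∉ Se ∧ ε < ‖c n‖ then |(c n).re| else 0) := by
      apply summable_of_ne_finset_zero (s := Finset.range NE)
      intro n hn
      have hNEn : NE ≤ n := by simpa using hn
      rw [if_neg]
      rintro ⟨-, h2⟩
      exact absurd (hNE n hNEn) (not_le.mpr h2)
    have hsumm := (hs1.add hs2).add hqs
    apply hsumm.congr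
    intro n
    rw [hq]
    dsimp only
    by_cases h1 : n ∈ Se
    · rw [if_pos h1, if_neg (by tauto), if_neg (by tauto), add_zero, add_zero]
    · rw [if_neg h1]
      rcases le_or_gt (‖c n‖) ε with h2 | h2
      · rw [if_neg (fun hh => absurd h2 (not_le.mpr hh.2)), if_pos ⟨h1, h2⟩,
          zero_add, zero_add]
      · rw [if_pos ⟨h1, h2⟩, if_neg (fun hh => absurd h2 (not_lt.mpr hh.2)),
          zero_add, add_zero]
  have hqtop := (not_summable_iff_tendsto_nat_atTop_of_nonneg hqnn).mp hqns
  set B : ℝ := |z.re| + 16*ε + ‖σ1‖ + ‖σ3‖ + 1 with hB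
  obtain ⟨Nb, hNb⟩ : ∃ Nb, B ≤ ∑ n ∈ Finset.range Nb, q n :=
    (hqtop.eventually_ge_atTop B).exists
  -- blocks
  have hth : ∀ j : ℕ, ∃ N, ∀ n, N ≤ n → ‖c n‖ ≤ ε / 2^j := by
    intro j
    obtain ⟨N, hN⟩ := (Metric.tendsto_atTop.mp hc) (ε / 2^j) (by positivity)
    refine ⟨N, fun n hn => ?_⟩
    have := hN n hn
    rw [dist_eq_norm, sub_zero] at this
    linarith
  choose th hthp using hth
  set NN : ℕ → ℕ := fun j => Nat.rec Nb (fun j' prev => max (prev + 1) (th (j'+1))) j with hNNdef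
  have hNN0 : NN 0 = Nb := rfl
  have hNNsucc : ∀ j, NN (j+1) = max (NN j + 1) (th (j+1)) := fun j => rfl
  have hNNmono : StrictMono NN := strictMono_nat_of_lt_succ (fun j => by rw [hNNsucc]; omega)
  set cond5 : ℕ → Prop := fun n => n ∉ Se ∧ ‖c n‖ ≤ ε ∧ Nb ≤ n with hcond5
  have hcnorm : ∀ j n, NN j ≤ n → cond5 n → ‖c n‖ ≤ ε / 2^j := by
    intro j n hn hcn
    rcases Nat.eq_zero_or_pos j with rfl | hj
    · simpa using hcn.2.1
    · obtain ⟨j', rfl⟩ : ∃ j'', j = j''+1 := ⟨j - 1, by omega⟩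
      apply hthp (j'+1) n
      have := hNNsucc j'
      omega
  have hblockex : ∀ j, ∃ x : ℕ → ℝ, (∀ i, x i = 1 ∨ x i = -1) ∧
      ∀ p, p ≤ NN (j+1) - NN j →
        ‖∑ i ∈ Finset.range p,
          (x i : ℂ) * (if cond5 (NN j + i) then c (NN j + i) else 0)‖ ≤ 4 * (ε / 2^j) := by
    intro j
    apply sg_BG _ _ _ (by positivity)
    intro i hi
    by_cases hcnd : cond5 (NN j + i)
    · rw [if_pos hcnd]; exact hcnorm j _ (by omega) hcnd
    · rw [if_neg hcnd]; simp; positivity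
  choose xb hxbs hxbb using hblockex
  have hexJ : ∀ n : ℕ, ∃ j, n < NN (j+1) := by
    intro n
    refine ⟨n, ?_⟩
    have := hNNmono.le_apply (x := n+1)
    omega
  set J : ℕ → ℕ := fun n => Nat.find (hexJ n) with hJdef
  have hJspec : ∀ n, n < NN (J n + 1) := fun n => Nat.find_spec (hexJ n)
  have hJuniq : ∀ j n, NN j ≤ n → n < NN (j+1) → J n = j := by
    intro j n h1 h2
    have hle : J n ≤ j := Nat.find_le h2
    have hge : ¬ J n < j := by
      intro hlt
      have h3 : NN (J n + 1) ≤ NN j := hNNmono.monotone (Nat.succ_le_of_lt hlt)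
      have h4 := hJspec n
      omega
    omega
  set x5 : ℕ → ℝ := fun n => xb (J n) (n - NN (J n)) with hx5
  set f5 : ℕ → ℂ := fun n => if cond5 n then (x5 n : ℂ) * c n else 0 with hf5
  set s5 : ℕ → ℂ := fun N => ∑ n ∈ Finset.range N, f5 n with hs5
  have hblocksum : ∀ j m1, NN j ≤ m1 → m1 ≤ NN (j+1) →
      ∑ n ∈ Finset.Ico (NN j) m1, f5 n
        = ∑ i ∈ Finset.range (m1 - NN j),
            (xb j i : ℂ) * (if cond5 (NN j + i) then c (NN j + i) else 0) := by
    intro j m1 h1 h2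
    rw [Finset.sum_Ico_eq_sum_range]
    apply Finset.sum_congr rfl
    intro i hi
    have hi' : i < m1 - NN j := Finset.mem_range.mp hi
    have hJi : J (NN j + i) = j := hJuniq j _ (by omega) (by omega)
    rw [hf5]
    simp only
    by_cases hcnd : cond5 (NN j + i)
    · rw [if_pos hcnd, if_pos hcnd, hx5]
      simp only
      rw [hJi]
      congr 3
      omega
    · rw [if_neg hcnd, if_neg hcnd, mul_zero]
  have hblockbound : ∀ j m1 m2, NN j ≤ m1 → m1 ≤ m2 → m2 ≤ NN (j+1) →
      ‖∑ n ∈ Finset.Ico m1 m2, f5 n‖ ≤ 8 * (ε / 2^j) := by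
    intro j m1 m2 h1 h2 h3
    have hsplit : ∑ n ∈ Finset.Ico (NN j) m1, f5 n + ∑ n ∈ Finset.Ico m1 m2, f5 n
        = ∑ n ∈ Finset.Ico (NN j) m2, f5 n := Finset.sum_Ico_consecutive _ h1 h2
    have e1 : ‖∑ n ∈ Finset.Ico (NN j) m1, f5 n‖ ≤ 4 * (ε / 2^j) := by
      rw [hblocksum j m1 h1 (by omega)]
      exact hxbb j _ (by omega)
    have e2 : ‖∑ n ∈ Finset.Ico (NN j) m2, f5 n‖ ≤ 4 * (ε / 2^j) := by
      rw [hblocksum j m2 (by omega) h3]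
      exact hxbb j _ (by omega)
    calc ‖∑ n ∈ Finset.Ico m1 m2, f5 n‖
        = ‖∑ n ∈ Finset.Ico (NN j) m2, f5 n - ∑ n ∈ Finset.Ico (NN j) m1, f5 n‖ := by
          rw [← hsplit]; congr 1; ring
      _ ≤ ‖∑ n ∈ Finset.Ico (NN j) m2, f5 n‖ + ‖∑ n ∈ Finset.Ico (NN j) m1, f5 n‖ :=
          norm_sub_le _ _
      _ ≤ 8 * (ε / 2^j) := by linarith
  have hspan : ∀ k j m1 m2, NN j ≤ m1 → m1 ≤ m2 → m2 ≤ NN (j+k) →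
      ‖∑ n ∈ Finset.Ico m1 m2, f5 n‖ ≤ 16 * (ε / 2^j) := by
    intro k
    induction k with
    | zero =>
      intro j m1 m2 h1 h2 h3
      have h3' : m2 ≤ NN j := by simpa using h3
      have hm : m1 = m2 := by omega
      rw [hm, Finset.Ico_self, Finset.sum_empty, norm_zero]
      positivity
    | succ k ih =>
      intro j m1 m2 h1 h2 h3
      have harith : 16 * (ε / 2^(j+1)) = 8 * (ε / 2^j) := by
        rw [pow_succ]
        field_simp
        ring
      by_cases hm2 : m2 ≤ NN (j+1)
      · have := hblockbound j m1 m2 h1 h2 hm2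
        have hpos : 0 < ε / 2^j := by positivity
        linarith
      push_neg at hm2
      by_cases hm1 : NN (j+1) ≤ m1
      · have h4 : m2 ≤ NN (j+1+k) := by
          rw [show j+1+k = j+(k+1) by omega]
          exact h3
        have := ih (j+1) m1 m2 hm1 h2 h4
        have hpos : 0 < ε / 2^j := by positivity
        linarith
      · push_neg at hm1
        have e1 := hblockbound j m1 (NN (j+1)) h1 (by omega) le_rfl
        have h4 : m2 ≤ NN (j+1+k) := by
          rw [show j+1+k = j+(k+1) by omega]
          exact h3
        have e2 := ih (j+1) (NN (j+1)) m2 le_rfl (by omega) h4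
        have hsplit : ∑ n ∈ Finset.Ico m1 (NN (j+1)), f5 n
            + ∑ n ∈ Finset.Ico (NN (j+1)) m2, f5 n
            = ∑ n ∈ Finset.Ico m1 m2, f5 n :=
          Finset.sum_Ico_consecutive _ (by omega) (by omega)
        rw [← hsplit]
        refine le_trans (norm_add_le _ _) ?_
        linarith
  have hs5cauchy : CauchySeq s5 := by
    rw [Metric.cauchySeq_iff']
    intro ε0 hε0
    obtain ⟨j, hj⟩ : ∃ j : ℕ, 16 * (ε / 2^j) < ε0 := by
      obtain ⟨j, hj⟩ := pow_unbounded_of_one_lt (16 * ε / ε0) (by norm_num : (1:ℝ) < 2)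
      refine ⟨j, ?_⟩
      have h2p : (0:ℝ) < 2^j := by positivity
      rw [div_lt_iff₀ hε0] at hj
      rw [show 16 * (ε / 2^j) = 16*ε/2^j by ring, div_lt_iff₀ h2p]
      linarith
    refine ⟨NN j, fun n hn => ?_⟩
    rw [dist_eq_norm, hs5]
    simp only
    rw [← Finset.sum_Ico_eq_sub _ hn]
    have hk : n ≤ NN (j + n) := by
      have := hNNmono.le_apply (x := j + n)
      omega
    exact lt_of_le_of_lt (hspan n j (NN j) n le_rfl hn hk) hj
  obtain ⟨w5, hw5⟩ := cauchySeq_tendsto_of_complete hs5cauchy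
  have hf5small : ∀ n, n < Nb → f5 n = 0 := by
    intro n hn
    rw [hf5]
    simp only
    rw [if_neg]
    rintro ⟨-, -, h3⟩
    omega
  have hs5bound : ∀ N, ‖s5 N‖ ≤ 16 * ε := by
    intro N
    have hz0 : s5 Nb = 0 := by
      rw [hs5]
      simp only
      apply Finset.sum_eq_zero
      intro n hn
      exact hf5small n (Finset.mem_range.mp hn)
    rcases le_or_gt N Nb with h | h
    · have : s5 N = 0 := by
        rw [hs5]
        simp only
        apply Finset.sum_eq_zero
        intro n hn
        exact hf5small n (by have := Finset.mem_range.mp hn; omega)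
      rw [this]
      simp
      positivity
    · have hk : N ≤ NN (0 + N) := by
        have := hNNmono.le_apply (x := 0 + N)
        omega
      have := hspan N 0 (NN 0) N (le_rfl) (by rw [hNN0]; omega) hk
      rw [Finset.sum_Ico_eq_sub _ (by rw [hNN0]; omega)] at this
      rw [hNN0] at this
      have hss : (∑ n ∈ Finset.range N, f5 n) - (∑ n ∈ Finset.range Nb, f5 n) = s5 N - s5 Nb := rfl
      rw [hss, hz0, sub_zero] at this
      calc ‖s5 N‖ ≤ 16 * (ε / 2^0) := this
        _ = 16 * ε := by norm_num
  have hw5bound : ‖w5‖ ≤ 16 * ε := le_of_tendsto' hw5.norm hs5bound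
  -- F0 steering
  set t4 : ℕ → ℝ := fun n => if n ∉ Se ∧ ‖c n‖ ≤ ε then (c n).re else 0 with ht4
  have habs_re : ∀ ζ : ℂ, |ζ.re| ≤ ‖ζ‖ := fun ζ => by
    exact Complex.abs_re_le_norm ζ
  have ht4b : ∀ i, i < Nb → |t4 i| ≤ ε := by
    intro i _
    rw [ht4]
    dsimp only
    split
    · rename_i hcnd
      exact le_trans (habs_re (c i)) hcnd.2
    · rw [abs_zero]; linarith
  set u0 : ℝ := z.re - σ1.re - σ3.re - w5.re with hu0
  have hu0b : |u0| ≤ B - 1 := by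
    rw [hu0, hB]
    have h1 := habs_re σ1
    have h2 := habs_re σ3
    have h3 := habs_re w5
    have h4 : |w5.re| ≤ 16*ε := le_trans h3 hw5bound
    have h5 : |z.re - σ1.re - σ3.re - w5.re| ≤ |z.re| + |σ1.re| + |σ3.re| + |w5.re| := by
      calc |z.re - σ1.re - σ3.re - w5.re| ≤ |z.re - σ1.re - σ3.re| + |w5.re| := abs_sub _ _
        _ ≤ |z.re - σ1.re| + |σ3.re| + |w5.re| := by linarith [abs_sub (z.re - σ1.re) σ3.re]
        _ ≤ |z.re| + |σ1.re| + |σ3.re| + |w5.re| := by linarith [abs_sub z.re σ1.re]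
    linarith
  have hu0cap : |u0| ≤ ∑ i ∈ Finset.range Nb, |t4 i| := by
    have heq : ∑ i ∈ Finset.range Nb, |t4 i| = ∑ n ∈ Finset.range Nb, q n := by
      apply Finset.sum_congr rfl
      intro i _
      rw [ht4, hq]
      dsimp only
      split
      · rfl
      · exact abs_zero
    rw [heq]
    linarith
  obtain ⟨x4, hx4s, hx4⟩ := sg_steer_fin t4 Nb ε hε ht4b u0 hu0cap
  set f4 : ℕ → ℂ := fun n => if n ∉ Se ∧ ‖c n‖ ≤ ε ∧ n < Nb then (x4 n : ℂ) * c n else 0 with hf4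
  have hf4supp : ∀ n, Nb ≤ n → f4 n = 0 := by
    intro n hn
    rw [hf4]
    dsimp only
    rw [if_neg]
    rintro ⟨-, -, h⟩
    omega
  set w4 : ℂ := ∑ n ∈ Finset.range Nb, f4 n with hw4
  have hT4 : Tendsto (fun N => ∑ n ∈ Finset.range N, f4 n) atTop (𝓝 w4) :=
    sg_finsupp f4 Nb hf4supp
  have hw4re : |w4.re - u0| ≤ ε := by
    have hre4 : w4.re = ∑ i ∈ Finset.range Nb, x4 i * t4 i := by
      rw [hw4, Complex.re_sum]
      apply Finset.sum_congr rfl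
      intro n hn
      have hnNb : n < Nb := Finset.mem_range.mp hn
      rw [hf4, ht4]
      dsimp only
      by_cases hcnd : n ∉ Se ∧ ‖c n‖ ≤ ε
      · rw [if_pos ⟨hcnd.1, hcnd.2, hnNb⟩, if_pos hcnd]
        simp [Complex.mul_re]
      · rw [if_neg (fun hh => hcnd ⟨hh.1, hh.2.1⟩), if_neg hcnd, mul_zero, Complex.zero_re]
    rw [hre4]
    exact hx4
  -- tail steering on imaginary parts
  set v0 : ℝ := z.im - σ1.im - σ3.im - w5.im - w4.im with hv0
  obtain ⟨x2, hx2s, hx2⟩ := sg_steer_inf (fun k => (c (e' k)).im) him_tail hbK v0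
  have habs2 : (fun k => |x2 k * (c (e' k)).re|) = fun k => |(c (e' k)).re| := by
    funext k
    rcases hx2s k with h | h <;> rw [h] <;> simp
  have hre2 : Summable (fun k => x2 k * (c (e' k)).re) := by
    have h1 : Summable (fun k => |x2 k * (c (e' k)).re|) := by rw [habs2]; exact haeK
    exact h1.of_abs
  set ρ : ℝ := ∑' k, x2 k * (c (e' k)).re with hρ
  have hρb : |ρ| ≤ ε := by
    have h1' : Summable (fun k => |x2 k * (c (e' k)).re|) := by rw [habs2]; exact haeK
    have hsn : Summable (fun k => ‖x2 k * (c (e' k)).re‖) := by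
      rw [show (fun k => ‖x2 k * (c (e' k)).re‖) = fun k => |x2 k * (c (e' k)).re|
        from funext fun k => Real.norm_eq_abs _]
      exact h1'
    have h1 := norm_tsum_le_tsum_norm hsn
    rw [hρ]
    simp only [Real.norm_eq_abs] at h1
    rw [habs2] at h1
    linarith
  have hre2T : Tendsto (fun m => ∑ k ∈ Finset.range m, x2 k * (c (e' k)).re) atTop (𝓝 ρ) :=
    hre2.hasSum.tendsto_sum_nat
  set w2 : ℂ := (ρ : ℂ) + (v0 : ℂ) * Complex.I with hw2
  have hterm2 : ∀ k, (x2 k : ℂ) * c (e' k)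
      = ((x2 k * (c (e' k)).re : ℝ) : ℂ) + ((x2 k * (c (e' k)).im : ℝ) : ℂ) * Complex.I := by
    intro k
    apply Complex.ext <;> simp [Complex.mul_re, Complex.mul_im]
  have hT2' : Tendsto (fun m => ∑ k ∈ Finset.range m, ((x2 k : ℂ) * c (e' k))) atTop (𝓝 w2) := by
    have hid2 : ∀ m, ∑ k ∈ Finset.range m, ((x2 k : ℂ) * c (e' k))
        = ((∑ k ∈ Finset.range m, x2 k * (c (e' k)).re : ℝ) : ℂ)
          + ((∑ k ∈ Finset.range m, x2 k * (c (e' k)).im : ℝ) : ℂ) * Complex.I := by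
      intro m
      rw [Finset.sum_congr rfl (fun k _ => hterm2 k), Finset.sum_add_distrib, ← Finset.sum_mul]
      push_cast
      ring
    have t1 : Tendsto (fun m => ((∑ k ∈ Finset.range m, x2 k * (c (e' k)).re : ℝ) : ℂ))
        atTop (𝓝 (ρ : ℂ)) := (Complex.continuous_ofReal.tendsto ρ).comp hre2T
    have t2 : Tendsto (fun m => ((∑ k ∈ Finset.range m, x2 k * (c (e' k)).im : ℝ) : ℂ))
        atTop (𝓝 (v0 : ℂ)) := (Complex.continuous_ofReal.tendsto v0).comp hx2
    have := t1.add (t2.mul_const Complex.I)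
    rw [hw2]
    exact this.congr (fun m => (hid2 m).symm)
  set F2 : ℕ → ℂ := fun n => if h : n ∈ Se' then (x2 (Classical.choose h) : ℂ) * c n else 0 with hF2
  have hchoose : ∀ (k : ℕ) (h : e' k ∈ Se'), Classical.choose h = k := by
    intro k h
    exact heK.injective (Classical.choose_spec h)
  have hF2e : ∀ k, F2 (e' k) = (x2 k : ℂ) * c (e' k) := by
    intro k
    rw [hF2]
    dsimp only
    rw [dif_pos (Set.mem_range_self k)]
    rw [hchoose k (Set.mem_range_self k)]
  have hT2 : Tendsto (fun N => ∑ n ∈ Finset.range N, F2 n) atTop (𝓝 w2) := by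
    apply sg_sub e' heK F2 ?_ w2 ?_
    · intro n hn
      rw [hF2]
      exact dif_neg hn
    · exact hT2'.congr (fun m => Finset.sum_congr rfl (fun k _ => (hF2e k).symm))
  -- global sign sequence
  set x : ℕ → ℝ := fun n =>
    if h : n ∈ Se' then x2 (Classical.choose h)
    else if n ∈ Se then 1
    else if ε < ‖c n‖ then 1
    else if n < Nb then x4 n
    else x5 n with hxdef
  have hx5s : ∀ n, x5 n = 1 ∨ x5 n = -1 := fun n => hxbs (J n) _
  have hxsigns : ∀ n, x n = 1 ∨ x n = -1 := by
    intro n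
    rw [hxdef]
    dsimp only
    by_cases h1 : n ∈ Se'
    · rw [dif_pos h1]; exact hx2s _
    rw [dif_neg h1]
    by_cases h2 : n ∈ Se
    · rw [if_pos h2]; exact Or.inl rfl
    rw [if_neg h2]
    by_cases h3 : ε < ‖c n‖
    · rw [if_pos h3]; exact Or.inl rfl
    rw [if_neg h3]
    by_cases h4 : n < Nb
    · rw [if_pos h4]; exact hx4s n
    · rw [if_neg h4]; exact hx5s n
  have hident : ∀ n, (x n : ℂ) * c n = f1 n + F2 n + f3 n + f4 n + f5 n := by
    intro n
    simp only [hxdef, hf1, hF2, hf3, hf4, hf5, hcond5]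
    by_cases h1 : n ∈ Se'
    · rw [dif_pos h1, dif_pos h1,
        if_neg (fun (hh : n ∈ Se ∧ n ∉ Se') => hh.2 h1),
        if_neg (fun (hh : n ∉ Se ∧ ε < ‖c n‖) => hh.1 (hSe'Se h1)),
        if_neg (fun (hh : n ∉ Se ∧ ‖c n‖ ≤ ε ∧ n < Nb) => hh.1 (hSe'Se h1)),
        if_neg (fun (hh : n ∉ Se ∧ ‖c n‖ ≤ ε ∧ Nb ≤ n) => hh.1 (hSe'Se h1))]
      ring
    rw [dif_neg h1, dif_neg h1]
    by_cases h2 : n ∈ Se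
    · rw [if_pos h2, if_pos (⟨h2, h1⟩ : n ∈ Se ∧ n ∉ Se'),
        if_neg (fun (hh : n ∉ Se ∧ ε < ‖c n‖) => hh.1 h2),
        if_neg (fun (hh : n ∉ Se ∧ ‖c n‖ ≤ ε ∧ n < Nb) => hh.1 h2),
        if_neg (fun (hh : n ∉ Se ∧ ‖c n‖ ≤ ε ∧ Nb ≤ n) => hh.1 h2)]
      push_cast
      ring
    rw [if_neg h2, if_neg (fun (hh : n ∈ Se ∧ n ∉ Se') => h2 hh.1)]
    by_cases h3 : ε < ‖c n‖
    · rw [if_pos h3, if_pos (⟨h2, h3⟩ : n ∉ Se ∧ ε < ‖c n‖),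
        if_neg (fun (hh : n ∉ Se ∧ ‖c n‖ ≤ ε ∧ n < Nb) => absurd h3 (not_lt.mpr hh.2.1)),
        if_neg (fun (hh : n ∉ Se ∧ ‖c n‖ ≤ ε ∧ Nb ≤ n) => absurd h3 (not_lt.mpr hh.2.1))]
      push_cast
      ring
    rw [if_neg h3, if_neg (fun (hh : n ∉ Se ∧ ε < ‖c n‖) => h3 hh.2)]
    by_cases h4 : n < Nb
    · rw [if_pos h4, if_pos (⟨h2, not_lt.mp h3, h4⟩ : n ∉ Se ∧ ‖c n‖ ≤ ε ∧ n < Nb),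
        if_neg (fun (hh : n ∉ Se ∧ ‖c n‖ ≤ ε ∧ Nb ≤ n) => absurd hh.2.2 (not_le.mpr h4))]
      ring
    · rw [if_neg h4,
        if_neg (fun (hh : n ∉ Se ∧ ‖c n‖ ≤ ε ∧ n < Nb) => absurd hh.2.2 h4),
        if_pos (⟨h2, not_lt.mp h3, not_lt.mp h4⟩ : n ∉ Se ∧ ‖c n‖ ≤ ε ∧ Nb ≤ n)]
      ring
  have hw5T : Tendsto (fun N => ∑ n ∈ Finset.range N, f5 n) atTop (𝓝 w5) := hw5
  have hsum_split : ∀ N, ∑ n ∈ Finset.range N, (x n : ℂ) * c n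
      = (∑ n ∈ Finset.range N, f1 n) + (∑ n ∈ Finset.range N, F2 n)
        + (∑ n ∈ Finset.range N, f3 n) + (∑ n ∈ Finset.range N, f4 n)
        + (∑ n ∈ Finset.range N, f5 n) := by
    intro N
    rw [← Finset.sum_add_distrib, ← Finset.sum_add_distrib, ← Finset.sum_add_distrib,
      ← Finset.sum_add_distrib]
    exact Finset.sum_congr rfl (fun n _ => hident n)
  set W : ℂ := σ1 + w2 + σ3 + w4 + w5 with hW
  have hTall : Tendsto (fun N => ∑ n ∈ Finset.range N, (x n : ℂ) * c n) atTop (𝓝 W) := by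
    have := (((hT1.add hT2).add hT3).add hT4).add hw5T
    exact this.congr (fun N => (hsum_split N).symm)
  have hw2re : w2.re = ρ := by rw [hw2]; simp
  have hw2im : w2.im = v0 := by rw [hw2]; simp
  have hWim : W.im = z.im := by
    rw [hW]
    simp only [Complex.add_im]
    rw [hw2im, hv0]
    ring
  have hWre : |W.re - z.re| ≤ 2 * ε := by
    rw [hW]
    simp only [Complex.add_re]
    rw [hw2re]
    have hrw : σ1.re + ρ + σ3.re + w4.re + w5.re - z.re = ρ + (w4.re - u0) := by
      rw [hu0]; ring
    rw [hrw]
    calc |ρ + (w4.re - u0)| ≤ |ρ| + |w4.re - u0| := abs_add_le _ _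
      _ ≤ 2 * ε := by linarith
  refine ⟨W, Metric.mem_ball.mpr ?_, x, hxsigns, hTall⟩
  calc dist W z = ‖W - z‖ := dist_eq_norm _ _
    _ ≤ |(W - z).re| + |(W - z).im| := Complex.norm_le_abs_re_add_abs_im _
    _ = |W.re - z.re| + |W.im - z.im| := by rw [Complex.sub_re, Complex.sub_im]
    _ ≤ 2*ε + 0 := by rw [hWim, sub_self, abs_zero]; linarith
    _ < r := by rw [hεdef] at hε ⊢; linarith

theorem stmt_7 (c : ℕ → ℂ) (hc : Tendsto c atTop (𝓝 0))
    (hlin : ∀ α β : ℝ, (α, β) ≠ (0, 0) →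
      ¬ Summable (fun n => |α * (c n).re + β * (c n).im|))
    (nk : ℕ → ℕ) (hmono : StrictMono nk)
    (hns : ¬ Summable (fun k => ‖c (nk k)‖))
    (hsum : Summable (fun k => |(c (nk k)).re|) ∨ Summable (fun k => |(c (nk k)).im|)) :
    Dense (rangeSet c) := by
  rcases hsum with hA | hB
  · have hre : ¬ Summable (fun n => |(c n).re|) := by
      have := hlin 1 0 (by norm_num)
      simpa using this
    have hbe : ¬ Summable (fun k => |(c (nk k)).im|) := by
      intro h
      apply hns
      have hsum2 : Summable (fun k => |(c (nk k)).re| + |(c (nk k)).im|) := hA.add h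
      exact Summable.of_nonneg_of_le (fun k => norm_nonneg _)
        (fun k => Complex.norm_le_abs_re_add_abs_im _) hsum2
    exact sg_main c hc hre nk hmono hbe hA
  · set c' : ℕ → ℂ := fun n => -Complex.I * c n with hc'def
    have hre' : ∀ n, (c' n).re = (c n).im := by
      intro n
      simp [hc'def, Complex.mul_re]
    have him' : ∀ n, (c' n).im = -(c n).re := by
      intro n
      simp [hc'def, Complex.mul_im]
    have hc'0 : Tendsto c' atTop (𝓝 0) := by
      have h := hc.const_mul (-Complex.I)
      rw [mul_zero] at h
      exact h
    have hre : ¬ Summable (fun n => |(c' n).re|) := by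
      have h0 := hlin 0 1 (by norm_num)
      intro h
      apply h0
      apply h.congr
      intro n
      rw [hre']
      ring_nf
    have hbe : ¬ Summable (fun k => |(c' (nk k)).im|) := by
      intro h
      apply hns
      have h2 : Summable (fun k => |(c (nk k)).re|) := by
        apply h.congr
        intro k
        rw [him', abs_neg]
      have hsum2 := h2.add hB
      exact Summable.of_nonneg_of_le (fun k => norm_nonneg _)
        (fun k => Complex.norm_le_abs_re_add_abs_im _) hsum2
    have hae : Summable (fun k => |(c' (nk k)).re|) := by
      apply hB.congr
      intro k
      rw [hre']
    have hdense' : Dense (rangeSet c') := sg_main c' hc'0 hre nk hmono hbe hae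
    have hII : Complex.I * -Complex.I = 1 := by
      rw [mul_neg, Complex.I_mul_I, neg_neg]
    have hkey : rangeSet c' = (fun w => -Complex.I * w) '' rangeSet c := by
      ext ζ
      constructor
      · rintro ⟨x, hxs, hT⟩
        refine ⟨Complex.I * ζ, ⟨x, hxs, ?_⟩, ?_⟩
        · have h2 : Tendsto (fun N => Complex.I * ∑ n ∈ Finset.range N, (x n : ℂ) * c' n)
              atTop (𝓝 (Complex.I * ζ)) := hT.const_mul _
          apply h2.congr
          intro N
          rw [Finset.mul_sum]
          apply Finset.sum_congr rfl
          intro n _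
          rw [hc'def]
          dsimp only
          rw [show Complex.I * ((x n : ℂ) * (-Complex.I * c n))
              = (Complex.I * -Complex.I) * ((x n : ℂ) * c n) by ring, hII, one_mul]
        · show -Complex.I * (Complex.I * ζ) = ζ
          rw [show -Complex.I * (Complex.I * ζ) = (Complex.I * -Complex.I) * ζ by ring,
            hII, one_mul]
      · rintro ⟨w, ⟨x, hxs, hT⟩, rfl⟩
        refine ⟨x, hxs, ?_⟩
        have h2 := hT.const_mul (-Complex.I)
        apply h2.congr
        intro N
        rw [Finset.mul_sum]
        apply Finset.sum_congr rfl
        intro n _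
        rw [hc'def]
        dsimp only
        ring
    rw [hkey] at hdense'
    have hcont : Continuous (fun w : ℂ => Complex.I * w) := continuous_const.mul continuous_id
    have hsurj : Function.Surjective (fun w : ℂ => Complex.I * w) := by
      intro ζ
      refine ⟨-Complex.I * ζ, ?_⟩
      show Complex.I * (-Complex.I * ζ) = ζ
      rw [show Complex.I * (-Complex.I * ζ) = (Complex.I * -Complex.I) * ζ by ring, hII, one_mul]
    have himg := hsurj.denseRange.dense_image hcont hdense'
    have heq : (fun w : ℂ => Complex.I * w) '' ((fun w => -Complex.I * w) '' rangeSet c)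
        = rangeSet c := by
      rw [Set.image_image]
      have hid : (fun w : ℂ => Complex.I * (-Complex.I * w)) = id := by
        funext w
        rw [show Complex.I * (-Complex.I * w) = (Complex.I * -Complex.I) * w by ring, hII,
          one_mul]
        rfl
      rw [hid, Set.image_id]
    rw [heq] at himg
    exact himg
end

section
/- Let (cₙ = aₙ + ibₙ) be a sequence of complex numbers with ∑|cₙ| = ∞, cₙ → 0, and aₙ/bₙ → t for some 0 < t < ∞. Fix δ ∈ (0,1) and positive reals (η_k) with ∑ η_k < ∞. Then there exist pairwise disjoint finite sets Λ₁ < Λ₂ < ⋯ ⊆ ℕ (each Λ_k preceding Λ_{k+1}) such that for all k: |∑_{n∈Λ_k} |bₙ| - δ^k| ≤ η_k, |(∑_{n∈Λ_k} aₙ·sign(bₙ))/(∑_{n∈Λ_k} |bₙ|) - t| < η_k, and moreover ∑_{k=1}^∞ ∑_{n∈Λ_k} max(|aₙ|,|bₙ|) < ∞. -/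
open Complex Filter Topology Finset

lemma aux_block_s13 (x : ℕ → ℝ) (hx : ∀ n, 0 ≤ x n) (hdiv : ¬ Summable x)
    (N : ℕ) (T ε : ℝ) (hT : 0 < T) (hε : 0 < ε) (hεT : ε ≤ T)
    (hsmall : ∀ n, N ≤ n → x n < ε) :
    ∃ j, N ≤ j ∧ T < ∑ n ∈ Finset.Icc N j, x n ∧ ∑ n ∈ Finset.Icc N j, x n < T + ε := by
  have hdivs : Tendsto (fun n => ∑ i ∈ Finset.range n, x i) atTop atTop :=
    (not_summable_iff_tendsto_nat_atTop_of_nonneg hx).mp hdiv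
  have hicc : ∀ j, N ≤ j + 1 → ∑ n ∈ Finset.Icc N j, x n
      = ∑ i ∈ Finset.range (j+1), x i - ∑ i ∈ Finset.range N, x i := by
    intro j hj
    rw [← Finset.Ico_add_one_right_eq_Icc, Finset.sum_Ico_eq_sub _ hj]
  have hex : ∃ j, T < ∑ n ∈ Finset.Icc N j, x n := by
    obtain ⟨M, hM⟩ := (hdivs.eventually_gt_atTop
      (T + ∑ i ∈ Finset.range N, x i)).exists_forall_of_atTop
    refine ⟨max M N, ?_⟩
    rw [hicc _ (le_trans (le_max_right M N) (Nat.le_succ_of_le le_rfl))]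
    have := hM (max M N + 1) (le_trans (le_max_left M N) (Nat.le_succ_of_le le_rfl))
    linarith
  classical
  set j := Nat.find hex with hjdef
  have hPj : T < ∑ n ∈ Finset.Icc N j, x n := Nat.find_spec hex
  have hNj : N ≤ j := by
    by_contra h
    rw [Finset.Icc_eq_empty (fun hh => h hh)] at hPj
    simp at hPj; linarith
  refine ⟨j, hNj, hPj, ?_⟩
  rcases Nat.eq_or_lt_of_le hNj with heq | hlt
  · exfalso
    rw [← heq, Finset.Icc_self, Finset.sum_singleton] at hPj
    have := hsmall N le_rfl
    linarith
  · obtain ⟨jj, hj⟩ := Nat.exists_eq_add_of_lt hlt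
    rw [hj] at hPj ⊢
    have hjj : N ≤ N + jj := Nat.le_add_right _ _
    have hsum : ∑ n ∈ Finset.Icc N (N + jj + 1), x n
        = (∑ n ∈ Finset.Icc N (N + jj), x n) + x (N + jj + 1) :=
      Finset.sum_Icc_succ_top (Nat.le_succ_of_le hjj) x
    have hmin : ¬ T < ∑ n ∈ Finset.Icc N (N + jj), x n :=
      Nat.find_min hex (show N + jj < Nat.find hex by rw [← hjdef]; omega)
    push_neg at hmin
    have := hsmall (N + jj + 1) (by omega)
    rw [hsum]
    linarith

theorem stmt_13 (c : ℕ → ℂ) (hns : ¬ Summable (fun n => ‖c n‖))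
    (hc : Tendsto c atTop (𝓝 0)) (t : ℝ) (ht0 : 0 < t)
    (hrat : Tendsto (fun n => (c n).re / (c n).im) atTop (𝓝 t))
    (δ : ℝ) (hδ0 : 0 < δ) (hδ1 : δ < 1)
    (η : ℕ → ℝ) (hη : ∀ k, 0 < η k) (hηs : Summable η) :
    ∃ Λ : ℕ → Finset ℕ,
      (∀ k, (Λ k).Nonempty) ∧
      (∀ k, ∀ i ∈ Λ k, ∀ j ∈ Λ (k + 1), i < j) ∧
      (∀ k, |(∑ n ∈ Λ k, |(c n).im|) - δ ^ (k + 1)| ≤ η k) ∧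
      (∀ k, |(∑ n ∈ Λ k, (c n).re * Real.sign ((c n).im)) / (∑ n ∈ Λ k, |(c n).im|) - t|
        < η k) ∧
      Summable (fun k => ∑ n ∈ Λ k, max |(c n).re| |(c n).im|) := by
  classical
  have habs : ∀ n, 0 ≤ |(c n).im| := fun n => abs_nonneg _
  have hb0 : Tendsto (fun n => |(c n).im|) atTop (𝓝 0) := by
    have h1 : Tendsto (fun n => (c n).im) atTop (𝓝 0) := by
      simpa [Function.comp_def] using (Complex.continuous_im.tendsto 0).comp hc
    simpa using h1.abs
  -- eventual comparison: im ≠ 0 and |re| ≤ (t+1)|im|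
  have hcomp : ∀ᶠ n in atTop, (c n).im ≠ 0 ∧ |(c n).re| ≤ (t + 1) * |(c n).im| := by
    have hev : ∀ᶠ n in atTop, |((c n).re / (c n).im) - t| < min 1 (t / 2) := by
      obtain ⟨N, hN⟩ := Metric.tendsto_atTop.mp hrat (min 1 (t / 2)) (by positivity)
      filter_upwards [eventually_ge_atTop N] with n hn
      simpa [Real.dist_eq] using hN n hn
    filter_upwards [hev] with n hn
    have hne : (c n).im ≠ 0 := by
      intro h
      rw [h, div_zero] at hn
      have h2 : |(0:ℝ) - t| < t / 2 := lt_of_lt_of_le hn (min_le_right _ _)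
      rw [zero_sub, abs_neg, abs_of_pos ht0] at h2
      linarith
    refine ⟨hne, ?_⟩
    have hq : |(c n).re / (c n).im| < 1 + t := by
      have h1 : |(c n).re / (c n).im| - |t| ≤ |(c n).re / (c n).im - t| :=
        abs_sub_abs_le_abs_sub _ _
      have h2 : |(c n).re / (c n).im - t| < 1 := lt_of_lt_of_le hn (min_le_left _ _)
      rw [abs_of_pos ht0] at h1
      linarith
    have ha : |(c n).re| = |(c n).re / (c n).im| * |(c n).im| := by
      rw [abs_div, div_mul_cancel₀ _ (abs_ne_zero.mpr hne)]
    rw [ha]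
    exact mul_le_mul_of_nonneg_right (by linarith) (abs_nonneg _)
  -- |im| not summable
  have hbns : ¬ Summable (fun n => |(c n).im|) := by
    intro hsum
    apply hns
    obtain ⟨N, hN⟩ := eventually_atTop.mp hcomp
    rw [← summable_nat_add_iff N]
    refine Summable.of_nonneg_of_le (f := fun n => (t + 2) * |(c (n + N)).im|)
      (fun n => norm_nonneg _) (fun n => ?_)
      (((summable_nat_add_iff N).mpr hsum).mul_left _)
    show ‖c (n + N)‖ ≤ (t + 2) * |(c (n + N)).im|
    have h1 := (hN (n + N) (Nat.le_add_left _ _)).2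
    have h2 := Complex.norm_le_abs_re_add_abs_im (c (n + N))
    nlinarith [habs (n + N)]
  -- main step: given k and a starting bound s, extract a good block
  have step : ∀ k s, ∃ p : Finset ℕ × ℕ,
      p.1.Nonempty ∧ (∀ n ∈ p.1, s ≤ n ∧ n ≤ p.2) ∧
      |(∑ n ∈ p.1, |(c n).im|) - δ ^ (k + 1)| ≤ η k ∧
      |(∑ n ∈ p.1, (c n).re * Real.sign ((c n).im)) / (∑ n ∈ p.1, |(c n).im|) - t| < η k ∧
      (∑ n ∈ p.1, max |(c n).re| |(c n).im|) ≤ (t + 1) * (δ ^ (k + 1) + η k) := by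
    intro k s
    set T := δ ^ (k + 1) with hTdef
    have hT : 0 < T := pow_pos hδ0 _
    set ε := min (η k) T with hεdef
    have hε : 0 < ε := lt_min (hη k) hT
    have hεT : ε ≤ T := min_le_right _ _
    have hεη : ε ≤ η k := min_le_left _ _
    obtain ⟨N1, hN1⟩ := Metric.tendsto_atTop.mp hrat (η k / 2)
      (by have := hη k; linarith)
    obtain ⟨N2, hN2⟩ := Metric.tendsto_atTop.mp hb0 ε hε
    obtain ⟨N3, hN3⟩ := eventually_atTop.mp hcomp
    set N := max (max N1 N2) (max N3 s) with hNdef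
    have hprop : ∀ n, N ≤ n →
        (c n).im ≠ 0 ∧ |(c n).re / (c n).im - t| ≤ η k / 2 ∧
        |(c n).re| ≤ (t + 1) * |(c n).im| ∧ |(c n).im| < ε := by
      intro n hn
      have h1 := hN1 n (le_trans (le_trans (le_max_left _ _) (le_max_left _ _)) hn)
      have h2 := hN2 n (le_trans (le_trans (le_max_right _ _) (le_max_left _ _)) hn)
      have h3 := hN3 n (le_trans (le_trans (le_max_left _ _) (le_max_right _ _)) hn)
      rw [Real.dist_eq] at h1
      rw [Real.dist_eq, sub_zero, _root_.abs_abs] at h2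
      exact ⟨h3.1, le_of_lt h1, h3.2, h2⟩
    obtain ⟨j, hNj, hlo, hhi⟩ := aux_block_s13 (fun n => |(c n).im|) habs hbns N T ε hT hε hεT
      (fun n hn => (hprop n hn).2.2.2)
    set B := ∑ n ∈ Finset.Icc N j, |(c n).im| with hBdef
    have hBpos : 0 < B := hT.trans hlo
    have hsN : s ≤ N := le_trans (le_max_right _ _) (le_max_right _ _)
    refine ⟨(Finset.Icc N j, j), ⟨N, Finset.mem_Icc.mpr ⟨le_rfl, hNj⟩⟩, ?_, ?_, ?_, ?_⟩
    · intro n hn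
      rw [Finset.mem_Icc] at hn
      exact ⟨le_trans hsN hn.1, hn.2⟩
    · rw [abs_le]
      constructor <;> [linarith; linarith]
    · -- ratio bound
      set A := ∑ n ∈ Finset.Icc N j, (c n).re * Real.sign ((c n).im) with hAdef
      have hkey : ∀ n ∈ Finset.Icc N j, (c n).re * Real.sign ((c n).im)
          = ((c n).re / (c n).im) * |(c n).im| := by
        intro n hn
        have hne := (hprop n (Finset.mem_Icc.mp hn).1).1
        rcases hne.lt_or_gt with hneg | hpos
        · rw [Real.sign_of_neg hneg, abs_of_neg hneg, mul_neg_one]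
          field_simp
        · rw [Real.sign_of_pos hpos, abs_of_pos hpos, mul_one,
            div_mul_cancel₀ _ (ne_of_gt hpos)]
      have h1 : A - t * B = ∑ n ∈ Finset.Icc N j, ((c n).re / (c n).im - t) * |(c n).im| := by
        rw [hAdef, Finset.sum_congr rfl hkey, hBdef, Finset.mul_sum,
          ← Finset.sum_sub_distrib]
        exact Finset.sum_congr rfl fun n _ => by ring
      have h2 : |A - t * B| ≤ (η k / 2) * B := by
        rw [h1]
        refine le_trans (Finset.abs_sum_le_sum_abs _ _) ?_
        rw [hBdef, Finset.mul_sum]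
        refine Finset.sum_le_sum fun n hn => ?_
        rw [abs_mul, _root_.abs_abs]
        exact mul_le_mul_of_nonneg_right
          ((hprop n (Finset.mem_Icc.mp hn).1).2.1) (abs_nonneg _)
      have hBne : B ≠ 0 := ne_of_gt hBpos
      have heq : A / B - t = (A - t * B) / B := by
        field_simp
      rw [heq, abs_div, abs_of_pos hBpos, div_lt_iff₀ hBpos]
      have h3 : (η k / 2) * B < η k * B := by nlinarith [hη k]
      linarith
    · -- max bound
      calc ∑ n ∈ Finset.Icc N j, max |(c n).re| |(c n).im|
          ≤ ∑ n ∈ Finset.Icc N j, (t + 1) * |(c n).im| := by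
            refine Finset.sum_le_sum fun n hn => ?_
            have h1 := (hprop n (Finset.mem_Icc.mp hn).1).2.2.1
            have h2 : |(c n).im| ≤ (t + 1) * |(c n).im| := by nlinarith [habs n]
            exact max_le h1 h2
        _ = (t + 1) * B := by rw [hBdef, Finset.mul_sum]
        _ ≤ (t + 1) * (T + η k) := by nlinarith
  -- recursive construction
  let F : ℕ → Finset ℕ × ℕ := fun k =>
    Nat.rec (Classical.choose (step 0 0))
      (fun k ih => Classical.choose (step (k + 1) (ih.2 + 1))) k
  have hGood : ∀ k, (F k).1.Nonempty ∧ (∀ n ∈ (F k).1, n ≤ (F k).2) ∧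
      |(∑ n ∈ (F k).1, |(c n).im|) - δ ^ (k + 1)| ≤ η k ∧
      |(∑ n ∈ (F k).1, (c n).re * Real.sign ((c n).im)) / (∑ n ∈ (F k).1, |(c n).im|) - t|
        < η k ∧
      (∑ n ∈ (F k).1, max |(c n).re| |(c n).im|) ≤ (t + 1) * (δ ^ (k + 1) + η k) := by
    intro k
    cases k with
    | zero =>
      have h := Classical.choose_spec (step 0 0)
      exact ⟨h.1, fun n hn => (h.2.1 n hn).2, h.2.2.1, h.2.2.2.1, h.2.2.2.2⟩
    | succ k =>
      have h := Classical.choose_spec (step (k + 1) ((F k).2 + 1))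
      exact ⟨h.1, fun n hn => (h.2.1 n hn).2, h.2.2.1, h.2.2.2.1, h.2.2.2.2⟩
  have hsep : ∀ k, ∀ n ∈ (F (k + 1)).1, (F k).2 < n := by
    intro k n hn
    have h := Classical.choose_spec (step (k + 1) ((F k).2 + 1))
    exact Nat.lt_of_succ_le (h.2.1 n hn).1
  refine ⟨fun k => (F k).1, fun k => (hGood k).1, ?_, fun k => (hGood k).2.2.1,
    fun k => (hGood k).2.2.2.1, ?_⟩
  · intro k i hi j hj
    exact lt_of_le_of_lt ((hGood k).2.1 i hi) (hsep k j hj)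
  · have hsb : Summable (fun k => (t + 1) * (δ ^ (k + 1) + η k)) := by
      apply Summable.mul_left
      refine Summable.add ?_ hηs
      have h1 : Summable (fun k => δ * δ ^ k) :=
        (summable_geometric_of_lt_one hδ0.le hδ1).mul_left δ
      exact h1.congr fun k => (pow_succ' δ k).symm
    refine Summable.of_nonneg_of_le
      (fun k => Finset.sum_nonneg fun n _ => le_max_of_le_left (abs_nonneg _))
      (fun k => (hGood k).2.2.2.2) hsb
end

section
/- Let cₙ = (-1)^n/(n·ln(n+1)) + i/n for n ≥ 1. Define α_k + iβ_k = -c_{4k+1} + c_{4k+2} for k ≥ 0, i.e., α_k = 1/((4k+1)ln(4k+2)) + 1/((4k+2)ln(4k+3)) and β_k = -1/((4k+1)(4k+2)). Then α_k/β_k → -∞ in the sense that |α_k/β_k| → ∞, while for the original sequence aₙ/bₙ → 0 where aₙ = (-1)^n/(n·ln(n+1)) and bₙ = 1/n. -/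
open Filter Topology

lemma div_log_atTop : Tendsto (fun x : ℝ => x / Real.log x) atTop atTop := by
  have h0 : Tendsto (fun x : ℝ => Real.log x / x) atTop (𝓝[>] 0) := by
    rw [tendsto_nhdsWithin_iff]
    constructor
    · simpa using Real.isLittleO_log_id_atTop.tendsto_div_nhds_zero
    · filter_upwards [eventually_gt_atTop (1:ℝ)] with x hx
      exact Set.mem_Ioi.2 (div_pos (Real.log_pos hx) (by linarith))
  have := h0.inv_tendsto_nhdsGT_zero
  refine this.congr fun x => ?_
  simp [one_div]

theorem stmt_16
    (a b α β : ℕ → ℝ)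
    (ha : ∀ n, a n = (-1) ^ n / (n * Real.log (n + 1)))
    (hb : ∀ n, b n = 1 / n)
    (hα : ∀ k, α k = 1 / ((4 * k + 1) * Real.log (4 * k + 2))
                    + 1 / ((4 * k + 2) * Real.log (4 * k + 3)))
    (hβ : ∀ k, β k = -(1 / ((4 * k + 1) * (4 * k + 2)))) :
    Tendsto (fun k => |α k / β k|) atTop atTop ∧
    Tendsto (fun n => a n / b n) atTop (𝓝 0) := by
  constructor
  · -- lower bound by (4k+3)/log(4k+3)
    have hcomp : Tendsto (fun k : ℕ => (4 * (k:ℝ) + 3) / Real.log (4 * k + 3)) atTop atTop := by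
      apply div_log_atTop.comp
      apply tendsto_atTop_add_const_right
      exact (tendsto_natCast_atTop_atTop (R := ℝ)).const_mul_atTop (by norm_num)
    refine tendsto_atTop_mono' _ ?_ hcomp
    filter_upwards [eventually_ge_atTop 1] with k hk
    have hk1 : (1:ℝ) ≤ (k:ℝ) := by exact_mod_cast hk
    set n : ℝ := (k:ℝ)
    have L2pos : 0 < Real.log (4 * n + 2) := Real.log_pos (by linarith)
    have L3pos : 0 < Real.log (4 * n + 3) := Real.log_pos (by linarith)
    have L23 : Real.log (4 * n + 2) ≤ Real.log (4 * n + 3) :=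
      Real.log_le_log (by linarith) (by linarith)
    have h1 : (0:ℝ) < 4 * n + 1 := by linarith
    have h2 : (0:ℝ) < 4 * n + 2 := by linarith
    have hαk : α k = 1 / ((4 * n + 1) * Real.log (4 * n + 2))
                    + 1 / ((4 * n + 2) * Real.log (4 * n + 3)) := hα k
    have hβk : β k = -(1 / ((4 * n + 1) * (4 * n + 2))) := hβ k
    have hterm : 1 / ((4 * n + 2) * Real.log (4 * n + 3))
        ≤ 1 / ((4 * n + 1) * Real.log (4 * n + 2)) := by
      apply one_div_le_one_div_of_le (by positivity)
      apply mul_le_mul (by linarith) L23 (le_of_lt L2pos) (le_of_lt h2)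
    have hαpos : 0 < α k := by
      rw [hαk]; positivity
    have hα_lb : 2 / ((4 * n + 2) * Real.log (4 * n + 3)) ≤ α k := by
      rw [hαk]
      have : 2 / ((4 * n + 2) * Real.log (4 * n + 3))
          = 1 / ((4 * n + 2) * Real.log (4 * n + 3)) + 1 / ((4 * n + 2) * Real.log (4 * n + 3)) := by
        ring
      rw [this]
      gcongr
    have habs : |α k / β k| = α k * ((4 * n + 1) * (4 * n + 2)) := by
      rw [hβk]
      rw [div_neg, abs_neg, div_div_eq_mul_div, div_one]
      exact abs_of_nonneg (by positivity)
    rw [habs]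
    have key : 2 / ((4 * n + 2) * Real.log (4 * n + 3)) * ((4 * n + 1) * (4 * n + 2))
        = 2 * (4 * n + 1) / Real.log (4 * n + 3) := by
      field_simp
    calc (4 * n + 3) / Real.log (4 * n + 3)
        ≤ 2 * (4 * n + 1) / Real.log (4 * n + 3) := by
          exact (div_le_div_iff_of_pos_right L3pos).mpr (by linarith)
      _ = 2 / ((4 * n + 2) * Real.log (4 * n + 3)) * ((4 * n + 1) * (4 * n + 2)) := key.symm
      _ ≤ α k * ((4 * n + 1) * (4 * n + 2)) := by
          apply mul_le_mul_of_nonneg_right hα_lb (by positivity)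
  · apply squeeze_zero_norm' (a := fun n : ℕ => 1 / Real.log (n + 1))
    · filter_upwards [eventually_ge_atTop 1] with n hn
      have hn1 : (1:ℝ) ≤ (n:ℝ) := by exact_mod_cast hn
      have Lpos : 0 < Real.log ((n:ℝ) + 1) := Real.log_pos (by linarith)
      have : a n / b n = (-1) ^ n / Real.log (n + 1) := by
        rw [ha n, hb n]
        field_simp
      rw [this, Real.norm_eq_abs, abs_div, abs_pow, abs_neg, abs_one, one_pow,
        abs_of_pos Lpos]
    · have : Tendsto (fun n : ℕ => Real.log ((n:ℝ) + 1)) atTop atTop :=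
        Real.tendsto_log_atTop.comp (tendsto_atTop_add_const_right _ _ tendsto_natCast_atTop_atTop)
      exact this.inv_tendsto_atTop.congr fun n => by simp [one_div]
end

section
/- Let (m_k)_{k≥0} and (n_k)_{k≥0} be strictly increasing sequences of nonnegative integers with m₀ = n₀ = 0 and n_{k+1} ≥ n_k + m_k + 3 for all k ≥ 0. Suppose (l_k)_{k≥1} is a sequence of integers such that the series ∑_k l_k 2^{-m_k} converges (so in particular |l_k 2^{-m_k}| ≤ 1 for all sufficiently large k). Then ∑_{k=1}^∞ l_k 2^{-m_k - n_k} ∈ ⋃_{n=1}^∞ 2^{-n}(ℤ + [-1/4, 1/4]). -/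
open Filter Topology Finset

set_option maxHeartbeats 1000000 in
theorem stmt_17 (m n : ℕ → ℕ) (hm : StrictMono m) (hn : StrictMono n)
    (hm0 : m 0 = 0) (hn0 : n 0 = 0)
    (hgap : ∀ k, n k + m k + 3 ≤ n (k + 1))
    (l : ℕ → ℤ)
    (hconv : ∃ S : ℝ, Tendsto (fun K => ∑ k ∈ Finset.Icc 1 K, (l k : ℝ) / 2 ^ m k)
      atTop (𝓝 S)) :
    ∃ T : ℝ, Tendsto (fun K => ∑ k ∈ Finset.Icc 1 K, (l k : ℝ) / 2 ^ (m k + n k))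
        atTop (𝓝 T) ∧
      T ∈ {x : ℝ | ∃ j : ℕ, 1 ≤ j ∧ ∃ p : ℤ, |2 ^ j * x - p| ≤ 1 / 4} := by
  obtain ⟨S, hS⟩ := hconv
  set a : ℕ → ℝ := fun k => (l k : ℝ) / 2 ^ m k with ha
  set f : ℕ → ℝ := fun k => (l k : ℝ) / 2 ^ (m k + n k) with hf
  -- the individual terms of the convergent series tend to zero
  have hterm : Tendsto (fun K => a (K + 1)) atTop (𝓝 0) := by
    have h1 : Tendsto (fun K => (∑ k ∈ Finset.Icc 1 (K + 1), a k)
        - ∑ k ∈ Finset.Icc 1 K, a k) atTop (𝓝 (S - S)) :=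
      (hS.comp (tendsto_add_atTop_nat 1)).sub hS
    rw [sub_self] at h1
    convert h1 using 2 with K
    rw [Finset.sum_Icc_succ_top (Nat.le_add_left 1 K)]
    ring
  obtain ⟨K₀, hK₀⟩ : ∃ K₀, ∀ k ≥ K₀, |a (k + 1)| ≤ 1 / 2 := by
    obtain ⟨N, hN⟩ := Metric.tendsto_atTop.mp hterm (1/2) (by norm_num)
    exact ⟨N, fun k hk => by
      have := hN k hk
      rw [Real.dist_eq, sub_zero] at this
      linarith⟩
  have hsmall : ∀ k, K₀ + 1 ≤ k → |a k| ≤ 1 / 2 := by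
    intro k hk
    obtain ⟨j, rfl⟩ : ∃ j, k = j + 1 := ⟨k - 1, by omega⟩
    exact hK₀ j (by omega)
  -- basic bound for f
  have hfb : ∀ k, K₀ + 1 ≤ k → |f k| ≤ (1 / 2) / 2 ^ n k := by
    intro k hk
    have h2 : (0:ℝ) < 2 ^ n k := by positivity
    have hfa : f k = a k / 2 ^ n k := by
      simp only [hf, ha, pow_add, div_div]
    rw [hfa, abs_div, abs_of_pos h2]
    gcongr
    exact hsmall k hk
  -- n k grows at least linearly
  have hnk : ∀ k, k ≤ n k := fun k => hn.le_apply
  -- summability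
  have hg : Summable (fun i => f (i + 1)) := by
    apply Summable.of_norm_bounded_eventually (g := fun i => (1/2 : ℝ) ^ i)
    · exact summable_geometric_of_lt_one (by norm_num) (by norm_num)
    · rw [Nat.cofinite_eq_atTop]
      filter_upwards [eventually_ge_atTop K₀] with i hi
      have h1 := hfb (i + 1) (by omega)
      have h2 : (2:ℝ) ^ (i + 1) ≤ 2 ^ n (i + 1) :=
        pow_le_pow_right₀ (by norm_num) (hnk (i + 1))
      have h3 : ((1:ℝ)/2) ^ i * 2 ^ (i + 1) = 2 := by
        rw [pow_succ, ← mul_assoc, ← mul_pow]; norm_num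
      calc ‖f (i + 1)‖ ≤ (1/2) / 2 ^ n (i + 1) := h1
        _ ≤ (1/2) / 2 ^ (i + 1) := by gcongr
        _ ≤ (1/2 : ℝ) ^ i := by
            rw [div_le_iff₀ (by positivity), h3]; norm_num
  set g : ℕ → ℝ := fun i => f (i + 1) with hgdef
  set T : ℝ := ∑' i, g i with hT
  have hIcc : ∀ K, ∑ k ∈ Finset.Icc 1 K, f k = ∑ i ∈ Finset.range K, g i := by
    intro K
    rw [← Finset.Ico_add_one_right_eq_Icc, Finset.sum_Ico_eq_sum_range]
    simp [hgdef, add_comm]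
  refine ⟨T, ?_, ?_⟩
  · have := hg.hasSum.tendsto_sum_nat
    convert this using 2 with K
    exact hIcc K
  · -- the membership
    set K := K₀ + 1 with hK
    refine ⟨m K + n K, ?_, ∑ k ∈ Finset.Icc 1 K, l k * 2 ^ (m K + n K - (m k + n k)), ?_⟩
    · have : 1 ≤ m K := by
        have := hm.le_apply (x := K)
        omega
      omega
    · -- the integer equals 2^j times the partial sum
      have hp : ((∑ k ∈ Finset.Icc 1 K, l k * 2 ^ (m K + n K - (m k + n k)) : ℤ) : ℝ)
          = 2 ^ (m K + n K) * ∑ k ∈ Finset.Icc 1 K, f k := by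
        push_cast
        rw [Finset.mul_sum]
        apply Finset.sum_congr rfl
        intro k hk
        have hk' : k ≤ K := (Finset.mem_Icc.mp hk).2
        have he : m k + n k ≤ m K + n K :=
          add_le_add (hm.monotone hk') (hn.monotone hk')
        rw [hf, pow_sub₀ (2:ℝ) two_ne_zero he]
        have h2 : (2:ℝ) ^ (m k + n k) ≠ 0 := by positivity
        field_simp
      rw [hp, hIcc]
      -- tail estimate
      have htail : T - ∑ i ∈ Finset.range K, g i = ∑' i, g (i + K) := by
        rw [hT, ← Summable.sum_add_tsum_nat_add K hg]
        ring
      have hiter : ∀ i, n (K + 1) + 3 * i ≤ n (K + 1 + i) := by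
        intro i
        induction i with
        | zero => simp
        | succ i ih =>
          have h1 := hgap (K + 1 + i)
          have h2 : n (K + 1 + (i + 1)) = n (K + 1 + i + 1) := rfl
          omega
      -- bound each tail term
      set c : ℝ := (1/2) / 2 ^ n (K + 1) with hc
      have hbound : ∀ i, |g (i + K)| ≤ c * (1/8) ^ i := by
        intro i
        have h1 := hfb (i + K + 1) (by omega)
        have h2 : n (K + 1) + 3 * i ≤ n (i + K + 1) := by
          have := hiter i
          have : n (K + 1 + i) = n (i + K + 1) := by ring_nf
          omega
        calc |g (i + K)| = |f (i + K + 1)| := rfl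
          _ ≤ (1/2) / 2 ^ n (i + K + 1) := h1
          _ ≤ (1/2) / 2 ^ (n (K + 1) + 3 * i) := by
              apply div_le_div_of_nonneg_left (by norm_num) (by positivity)
              exact pow_le_pow_right₀ (by norm_num) h2
          _ = c * (1/8) ^ i := by
              rw [hc, pow_add, pow_mul]
              field_simp
              ring_nf
              rw [← mul_pow]; norm_num
      have hsum8 : Summable (fun i : ℕ => c * (1/8 : ℝ) ^ i) :=
        (summable_geometric_of_lt_one (by norm_num) (by norm_num)).mul_left _
      have hgs : Summable (fun i => g (i + K)) := (summable_nat_add_iff K).mpr hg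
      have htb : |∑' i, g (i + K)| ≤ c * (8/7) := by
        have habs : Summable (fun i => ‖g (i + K)‖) := hgs.norm
        have h1 : ‖∑' i, g (i + K)‖ ≤ ∑' i, ‖g (i + K)‖ := norm_tsum_le_tsum_norm habs
        have h2 : ∑' i, ‖g (i + K)‖ ≤ ∑' i, c * (1/8 : ℝ) ^ i := by
          apply Summable.tsum_le_tsum _ habs hsum8
          intro i; rw [Real.norm_eq_abs]; exact hbound i
        have h3 : ∑' i, c * (1/8 : ℝ) ^ i = c * (1 - 1/8)⁻¹ := by
          rw [tsum_mul_left, tsum_geometric_of_lt_one (by norm_num) (by norm_num)]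
        rw [← Real.norm_eq_abs]
        linarith [h1, h2, h3.le]
      -- finish
      have hpow : (2:ℝ) ^ (m K + n K) * 8 ≤ 2 ^ n (K + 1) := by
        have h1 : m K + n K + 3 ≤ n (K + 1) := by have := hgap K; omega
        calc (2:ℝ) ^ (m K + n K) * 8 = 2 ^ (m K + n K + 3) := by rw [pow_add 2 (m K + n K) 3]; norm_num
          _ ≤ 2 ^ n (K + 1) := pow_le_pow_right₀ (by norm_num) h1
      have hcpos : (0:ℝ) < 2 ^ n (K + 1) := by positivity
      have hfinal : (2:ℝ) ^ (m K + n K) * (c * (8/7)) ≤ 1/4 := by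
        rw [hc]
        rw [div_mul_eq_mul_div, div_mul_eq_mul_div, ← mul_div_assoc]
        rw [div_le_iff₀ hcpos]
        nlinarith [pow_pos (by norm_num : (0:ℝ) < 2) (m K + n K)]
      have habs : |2 ^ (m K + n K) * T - 2 ^ (m K + n K) * ∑ i ∈ Finset.range K, g i|
          = 2 ^ (m K + n K) * |T - ∑ i ∈ Finset.range K, g i| := by
        rw [← mul_sub, abs_mul, abs_of_pos (by positivity)]
      rw [habs, htail]
      calc (2:ℝ) ^ (m K + n K) * |∑' i, g (i + K)|
          ≤ 2 ^ (m K + n K) * (c * (8/7)) := by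
            apply mul_le_mul_of_nonneg_left htb (by positivity)
        _ ≤ 1/4 := hfinal
end

section
/- Equip {-1,1}^ℕ with the metric d((xₙ),(yₙ)) = 2^{-k} where k is the first index at which the sequences differ (and d = 0 if equal). Let Λ ⊆ ℕ with upper density D̄(Λ) := limsup_k #(Λ ∩ [0,k])/k < ε for some 0 < ε < 1, and let h_Λ : {-1,1}^ℕ → {-1,1}^ℕ be the map deleting the coordinates indexed by Λ. Then for every B ⊆ {-1,1}^ℕ, (1-ε)·dim_H(h_Λ(B)) ≤ dim_H(B), where dim_H denotes Hausdorff dimension with respect to d. -/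
open Filter Topology Set
open scoped NNReal ENNReal

attribute [local instance] PiNat.metricSpace

/-- Deleting the coordinates indexed by `Λ` and reindexing by the increasing
enumeration of `ℕ \ Λ`. -/
noncomputable def deleteCoords (Λ : Set ℕ) (x : ℕ → Bool) : ℕ → Bool :=
  fun k => x (Nat.nth (· ∉ Λ) k)

open scoped Classical in
lemma count_add_count (Λ : Set ℕ) (n : ℕ) :
    Nat.count (· ∉ Λ) n + Nat.count (· ∈ Λ) n = n := by
  classical
  induction n with
  | zero => simp
  | succ n ih =>
    rw [Nat.count_succ, Nat.count_succ]
    by_cases h : n ∈ Λ <;> simp [h] <;> omega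

open scoped Classical in
lemma ncard_eq_count (Λ : Set ℕ) (n : ℕ) :
    (Λ ∩ Set.Iic n).ncard = Nat.count (· ∈ Λ) (n + 1) := by
  classical
  rw [Nat.count_eq_card_filter_range]
  have : Λ ∩ Set.Iic n = ↑((Finset.range (n + 1)).filter (· ∈ Λ)) := by
    ext x
    simp [Nat.lt_succ_iff, and_comm]
  rw [this, Set.ncard_coe_finset]

lemma half_pow_nat (m : ℕ) : (1/2 : ℝ) ^ m = (2:ℝ) ^ (-(m:ℝ)) := by
  rw [one_div, inv_pow, ← Real.rpow_natCast, ← Real.rpow_neg (by norm_num)]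

theorem stmt_18 (Λ : Set ℕ) (ε : ℝ) (hε0 : 0 < ε) (hε1 : ε < 1)
    (hdens : Filter.limsup (fun k => ((Λ ∩ Set.Iic k).ncard : ℝ) / k) atTop < ε)
    (B : Set (ℕ → Bool)) :
    ENNReal.ofReal (1 - ε) * dimH (deleteCoords Λ '' B) ≤ dimH B := by
  classical
  have h1ε : (0:ℝ) < 1 - ε := by linarith
  have hbdd : IsBoundedUnder (· ≤ ·) atTop (fun k => ((Λ ∩ Set.Iic k).ncard : ℝ) / k) := by
    refine ⟨2, eventually_map.2 ?_⟩
    filter_upwards [eventually_ge_atTop 1] with k hk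
    have h1 : (Λ ∩ Set.Iic k).ncard ≤ (Set.Iic k).ncard :=
      Set.ncard_le_ncard inter_subset_right (Set.finite_Iic k)
    have h2 : (Set.Iic k).ncard = k + 1 := by
      rw [← Finset.coe_Iic, Set.ncard_coe_finset, Nat.card_Iic]
    have hkpos : (0:ℝ) < k := by exact_mod_cast hk
    rw [div_le_iff₀ hkpos]
    have h3 : ((Λ ∩ Set.Iic k).ncard : ℝ) ≤ (k : ℝ) + 1 := by
      have := h2 ▸ h1
      exact_mod_cast this
    have h4 : (1:ℝ) ≤ (k:ℝ) := by exact_mod_cast hk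
    linarith
  have hev : ∀ᶠ k in atTop, ((Λ ∩ Set.Iic k).ncard : ℝ) / k < ε :=
    Filter.eventually_lt_of_limsup_lt hdens hbdd
  obtain ⟨N0, hN0⟩ := hev.exists_forall_of_atTop
  set N := N0 + 1 with hNdef
  -- key counting estimate: for n ≥ N, count (·∉Λ) n ≥ (1-ε) * n
  have hcount : ∀ n : ℕ, N ≤ n → (1 - ε) * n ≤ (Nat.count (· ∉ Λ) n : ℝ) := by
    intro n hn
    have hnpos : (0:ℝ) < n := by
      have : 0 < n := lt_of_lt_of_le (Nat.succ_pos N0) hn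
      exact_mod_cast this
    have h1 : ((Λ ∩ Set.Iic n).ncard : ℝ) < ε * n := by
      have := hN0 n (le_trans (Nat.le_succ N0) hn)
      rwa [div_lt_iff₀ hnpos] at this
    have h2 : Nat.count (· ∈ Λ) n ≤ (Λ ∩ Set.Iic n).ncard := by
      rw [ncard_eq_count]
      exact Nat.count_monotone _ (Nat.le_succ n)
    have h3 := count_add_count Λ n
    have h4 : (Nat.count (· ∉ Λ) n : ℝ) = n - Nat.count (· ∈ Λ) n := by
      have := congrArg (Nat.cast : ℕ → ℝ) h3
      push_cast at this
      linarith
    have h5 : (Nat.count (· ∈ Λ) n : ℝ) < ε * n := lt_of_le_of_lt (by exact_mod_cast h2) h1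
    rw [h4]; nlinarith
  set r : ℝ≥0 := ⟨1 - ε, le_of_lt h1ε⟩ with hrdef
  have hrpos : 0 < r := by
    rw [← NNReal.coe_lt_coe]
    exact h1ε
  have hrle1 : (r : ℝ) ≤ 1 := by
    simp only [hrdef, NNReal.coe_mk]
    show 1 - ε ≤ 1; linarith
  set C : ℝ≥0 := 2 ^ N with hCdef
  have hHolder : HolderWith C r (deleteCoords Λ) := by
    intro x y
    rcases eq_or_ne (deleteCoords Λ x) (deleteCoords Λ y) with hfe | hfne
    · rw [hfe, edist_self]
      exact zero_le
    have hne : x ≠ y := fun h => hfne (by rw [h])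
    set n := PiNat.firstDiff x y with hn
    set F := PiNat.firstDiff (deleteCoords Λ x) (deleteCoords Λ y) with hF
    -- firstDiff of images is at least count (·∉Λ) n
    have hfd : Nat.count (· ∉ Λ) n ≤ F := by
      refine le_of_not_gt fun h => PiNat.apply_firstDiff_ne hfne ?_
      exact PiNat.apply_eq_of_lt_firstDiff (x := x) (y := y) (Nat.nth_lt_of_lt_count h)
    have hdx : dist x y = (1/2 : ℝ) ^ n := PiNat.dist_eq_of_ne hne
    have hdf : dist (deleteCoords Λ x) (deleteCoords Λ y) = (1/2 : ℝ) ^ F :=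
      PiNat.dist_eq_of_ne hfne
    -- exponent inequality, in both cases
    have expo : (n : ℝ) * r ≤ (N : ℝ) + F := by
      rcases le_or_gt N n with hNn | hnN
      · have h1 := hcount n hNn
        have h2 : ((Nat.count (· ∉ Λ) n : ℕ) : ℝ) ≤ (F : ℝ) := by exact_mod_cast hfd
        have : (n : ℝ) * r = (1 - ε) * n := by
          simp only [hrdef, NNReal.coe_mk]; show (n:ℝ) * (1 - ε) = (1 - ε) * n; ring
        rw [this]
        have hF0 : (0:ℝ) ≤ (N:ℝ) := Nat.cast_nonneg N
        linarith
      · have h1 : (n : ℝ) * r ≤ (n : ℝ) := by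
          nlinarith [Nat.cast_nonneg (α := ℝ) n, r.coe_nonneg]
        have h2 : (n : ℝ) ≤ (N : ℝ) := by exact_mod_cast hnN.le
        have h3 : (0:ℝ) ≤ (F : ℝ) := Nat.cast_nonneg F
        linarith
    -- the real-valued Hölder inequality
    have key : dist (deleteCoords Λ x) (deleteCoords Λ y) ≤ (C : ℝ) * dist x y ^ (r : ℝ) := by
      have hC' : (C : ℝ) = (2:ℝ) ^ (N:ℝ) := by
        rw [hCdef, NNReal.coe_pow, NNReal.coe_ofNat, Real.rpow_natCast]
      rw [hdx, hdf, half_pow_nat, half_pow_nat, hC',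
        ← Real.rpow_mul (by norm_num : (0:ℝ) ≤ 2),
        ← Real.rpow_add (by norm_num : (0:ℝ) < 2)]
      apply Real.rpow_le_rpow_of_exponent_le (by norm_num)
      have h9 : -(n:ℝ) * r = -((n:ℝ) * r) := by ring
      rw [h9]
      linarith
    -- convert to edist
    rw [edist_dist, edist_dist]
    calc ENNReal.ofReal (dist (deleteCoords Λ x) (deleteCoords Λ y))
        ≤ ENNReal.ofReal ((C : ℝ) * dist x y ^ (r : ℝ)) := ENNReal.ofReal_le_ofReal key
      _ = (C : ℝ≥0∞) * ENNReal.ofReal (dist x y) ^ (r : ℝ) := by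
          rw [ENNReal.ofReal_mul C.coe_nonneg, ENNReal.ofReal_coe_nnreal,
            ← ENNReal.ofReal_rpow_of_nonneg dist_nonneg r.coe_nonneg]
  have hdim := hHolder.dimH_image_le hrpos B
  have hofr : ENNReal.ofReal (1 - ε) = (r : ℝ≥0∞) := by
    rw [ENNReal.ofReal, ENNReal.coe_inj]
    ext
    simp [hrdef, Real.coe_toNNReal _ h1ε.le]; rfl
  rw [hofr]
  calc (r : ℝ≥0∞) * dimH (deleteCoords Λ '' B) ≤ (r : ℝ≥0∞) * (dimH B / r) :=
        mul_le_mul_right hdim _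
    _ ≤ dimH B := ENNReal.mul_div_le
end
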